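/- arXiv:1601.02942 — 6 statements merged into one kernel-verified Lean document; each statement's English description precedes it below -/
import Mathlib

section
/- Let A, P, Q ∈ ℝ² be affinely independent points and let U₀, U₁, Ũ₁ : ℝ² → ℝ be affine functions with (constant) gradients ∇U₀, ∇U₁, ∇Ũ₁ ∈ ℝ². Assume the continuity conditions Ũ₁(P) = U₁(P) and Ũ₁(Q) = U₁(Q) (agreement on the edge PQ), and Ũ₁(P) = U₀(P) and Ũ₁(A) = U₀(A) (agreement on the edge PA). Let α̃ = ∠APQ be the interior angle at P of the triangle APQ. Then ‖∇Ũ₁ − ∇U₁‖ · sin(α̃) · ‖A − P‖ = |⟨A − P, ∇U₀ − ∇U₁⟩|. (Since sin(π − α̃) = sin α̃, this is the paper's identity |∇(Ũ₁ − U₁)| = (cos ξ / sin(π − α̃)) |∇(U₀ − U₁)|, where ξ is the angle between ∇(U₀ − U₁) and the edge vector v = A − P.) -/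
open scoped RealInnerProductSpace

/-- `ℝ²` with the Euclidean inner product. -/
abbrev E2 := EuclideanSpace ℝ (Fin 2)

/-- Key squared algebraic identity in coordinates: if `d ⟂ u` then
`(d·d) * ((v·v)(u·u) - (v·u)²) * (u·u) = (v·d)² * (u·u)²`. -/
lemma key_alg (v0 v1 u0 u1 d0 d1 : ℝ) (hs : d0 * u0 + d1 * u1 = 0) :
    (d0 ^ 2 + d1 ^ 2) * ((v0 ^ 2 + v1 ^ 2) * (u0 ^ 2 + u1 ^ 2)
        - (v0 * u0 + v1 * u1) ^ 2) * (u0 ^ 2 + u1 ^ 2)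
      = (v0 * d0 + v1 * d1) ^ 2 * (u0 ^ 2 + u1 ^ 2) ^ 2 := by
  linear_combination ((d0 * u0 + d1 * u1) * ((v0 * u1 - v1 * u0) ^ 2
      - (v0 * u0 + v1 * u1) ^ 2)
    - 2 * (v0 * u0 + v1 * u1) * (v0 * u1 - v1 * u0) * (d0 * u1 - d1 * u0)) * hs

lemma inner_coords (x y : E2) : ⟪x, y⟫ = x 0 * y 0 + x 1 * y 1 := by
  simp [PiLp.inner_apply, Fin.sum_univ_two, mul_comm]

set_option maxHeartbeats 1000000 in
/-- Lemma 2.1 (with Remark 2.1): for affine functions `U₀, U₁, Ũ₁` on `ℝ²` with constant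
gradients `g0, g1, gt1`, agreeing as stated across the edges `PQ` and `PA` of the triangle
`APQ`, one has `‖∇(Ũ₁ − U₁)‖ · sin(α̃) · ‖A − P‖ = |⟨A − P, ∇(U₀ − U₁)⟩|`,
where `α̃` is the angle of the triangle at `P`. -/
theorem stmt_0 (A P Q : E2) (hind : AffineIndependent ℝ ![A, P, Q])
    (g0 g1 gt1 : E2) (c0 c1 ct1 : ℝ)
    (U0 U1 Ut1 : E2 → ℝ)
    (hU0 : ∀ x, U0 x = ⟪g0, x⟫ + c0)
    (hU1 : ∀ x, U1 x = ⟪g1, x⟫ + c1)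
    (hUt1 : ∀ x, Ut1 x = ⟪gt1, x⟫ + ct1)
    (h1 : Ut1 P = U1 P) (h2 : Ut1 Q = U1 Q)
    (h3 : Ut1 P = U0 P) (h4 : Ut1 A = U0 A) :
    ‖gt1 - g1‖ * Real.sin (EuclideanGeometry.angle A P Q) * ‖A - P‖ =
      |⟪A - P, g0 - g1⟫| := by
  rw [hUt1, hU1] at h1 h2
  rw [hUt1, hU0] at h3 h4
  have hPQ : P ≠ Q := hind.injective.ne (by decide : (1 : Fin 3) ≠ 2)
  set v : E2 := A - P with hv
  set u : E2 := Q - P with hu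
  set d : E2 := gt1 - g1 with hd
  have hu0 : u ≠ 0 := sub_ne_zero.mpr (Ne.symm hPQ)
  -- perpendicularity of d and u
  have hdu : ⟪d, u⟫ = 0 := by
    simp only [hd, hu, inner_sub_left, inner_sub_right]
    linarith
  -- RHS inner product equals ⟪v, d⟫
  have hvd : ⟪v, g0 - g1⟫ = ⟪v, d⟫ := by
    have hperp : ⟪v, gt1 - g0⟫ = 0 := by
      simp only [hv, inner_sub_left, inner_sub_right]
      linarith [real_inner_comm A gt1, real_inner_comm P gt1,
        real_inner_comm A g0, real_inner_comm P g0]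
    have expand : ⟪v, g0 - g1⟫ = ⟪v, d⟫ - ⟪v, gt1 - g0⟫ := by
      simp only [hd, inner_sub_right]; ring
    rw [expand, hperp, sub_zero]
  rw [hvd]
  have hangle : EuclideanGeometry.angle A P Q = InnerProductGeometry.angle v u := rfl
  rw [hangle]
  rcases eq_or_ne d 0 with hd0 | hd0
  · simp [hd0]
  -- multiply both sides by ‖u‖
  have hun : ‖u‖ ≠ 0 := norm_ne_zero_iff.mpr hu0
  apply mul_right_cancel₀ hun
  have hsin := InnerProductGeometry.sin_angle_mul_norm_mul_norm v u
  have lhs_eq : ‖d‖ * Real.sin (InnerProductGeometry.angle v u) * ‖v‖ * ‖u‖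
      = ‖d‖ * Real.sqrt (⟪v, v⟫ * ⟪u, u⟫ - ⟪v, u⟫ * ⟪v, u⟫) := by
    rw [← hsin]; ring
  rw [lhs_eq]
  have hnn : (0:ℝ) ≤ ⟪v, v⟫ * ⟪u, u⟫ - ⟪v, u⟫ * ⟪v, u⟫ := by
    have h := real_inner_mul_inner_self_le v u
    have h1 : ⟪v, v⟫ = ‖v‖ * ‖v‖ := real_inner_self_eq_norm_mul_norm v
    have h2 : ⟪u, u⟫ = ‖u‖ * ‖u‖ := real_inner_self_eq_norm_mul_norm u
    nlinarith [abs_nonneg ⟪v, u⟫, abs_mul_abs_self ⟪v, u⟫]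
  have lhsnn : (0:ℝ) ≤ ‖d‖ * Real.sqrt (⟪v, v⟫ * ⟪u, u⟫ - ⟪v, u⟫ * ⟪v, u⟫) :=
    mul_nonneg (norm_nonneg _) (Real.sqrt_nonneg _)
  have rhsnn : (0:ℝ) ≤ |⟪v, d⟫| * ‖u‖ := mul_nonneg (abs_nonneg _) (norm_nonneg _)
  have hsq : (‖d‖ * Real.sqrt (⟪v, v⟫ * ⟪u, u⟫ - ⟪v, u⟫ * ⟪v, u⟫)) ^ 2
      = (|⟪v, d⟫| * ‖u‖) ^ 2 := by
    rw [mul_pow, mul_pow, Real.sq_sqrt hnn, sq_abs]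
    have hdn : ‖d‖ ^ 2 = ⟪d, d⟫ := by
      rw [real_inner_self_eq_norm_mul_norm]; ring
    have hun2 : ‖u‖ ^ 2 = ⟪u, u⟫ := by
      rw [real_inner_self_eq_norm_mul_norm]; ring
    rw [hdn, hun2]
    rw [inner_coords v u, inner_coords v d, inner_coords d d, inner_coords u u, inner_coords v v]
    rw [inner_coords d u] at hdu
    have huu : u 0 ^ 2 + u 1 ^ 2 ≠ 0 := by
      intro h
      apply hu0
      have h0 : u 0 = 0 := by nlinarith [sq_nonneg (u 0), sq_nonneg (u 1)]
      have h1' : u 1 = 0 := by nlinarith [sq_nonneg (u 0), sq_nonneg (u 1)]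
      ext i
      fin_cases i <;> simpa
    have key := key_alg (v 0) (v 1) (u 0) (u 1) (d 0) (d 1) hdu
    have goal2 : ((d 0 * d 0 + d 1 * d 1) * ((v 0 * v 0 + v 1 * v 1) * (u 0 * u 0 + u 1 * u 1)
        - (v 0 * u 0 + v 1 * u 1) * (v 0 * u 0 + v 1 * u 1))
        - (v 0 * d 0 + v 1 * d 1) ^ 2 * (u 0 * u 0 + u 1 * u 1)) * (u 0 ^ 2 + u 1 ^ 2) = 0 := by
      linear_combination key
    rcases mul_eq_zero.mp goal2 with h | h
    · linear_combination h
    · exact absurd h huu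
  nlinarith [hsq, lhsnn, rhsnn]
end

section
/- Let N ≥ 1 be an integer and let h₀, …, h_N and a₀, …, a_N be real numbers with hᵢ > 0 for all i = 0, …, N. Suppose Σᵢ₌₀^N hᵢ aᵢ² = A, Σᵢ₌₀^N hᵢ aᵢ = 0, and Σᵢ₌₀^N hᵢ = L, where A ≥ 0. Then Σᵢ₌₁^N (aᵢ − aᵢ₋₁)² ≥ A/(L·N). -/
lemma tele_aux (a : ℕ → ℝ) (q : ℕ) : ∀ p, q ≤ p →
    |a p - a q| ≤ ∑ i ∈ Finset.Ico q p, |a (i + 1) - a i| := by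
  intro p
  induction p with
  | zero => intro hq; interval_cases q; simp
  | succ n ih =>
    intro hq
    rcases Nat.lt_or_ge q (n + 1) with hlt | hge
    · have hqn : q ≤ n := Nat.lt_succ_iff.mp hlt
      rw [Finset.sum_Ico_succ_top hqn]
      calc |a (n + 1) - a q| ≤ |a n - a q| + |a (n + 1) - a n| := by
            have := abs_add_le (a n - a q) (a (n + 1) - a n)
            simpa [sub_add_sub_cancel'] using this
        _ ≤ (∑ i ∈ Finset.Ico q n, |a (i + 1) - a i|) + |a (n + 1) - a n| := by
            linarith [ih hqn]
    · have : q = n + 1 := le_antisymm hq hge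
      subst this; simp

/-- Lemma 2.5: if `h₀,…,h_N > 0`, `Σ hᵢ aᵢ² = A`, `Σ hᵢ aᵢ = 0` and `Σ hᵢ = L` with
`A ≥ 0`, then `Σ_{i=1}^N (aᵢ − aᵢ₋₁)² ≥ A/(L·N)`. -/
theorem stmt_3 (N : ℕ) (hN : 1 ≤ N) (h a : ℕ → ℝ) (A L : ℝ)
    (hpos : ∀ i ≤ N, 0 < h i)
    (hA : ∑ i ∈ Finset.range (N + 1), h i * (a i) ^ 2 = A)
    (hzero : ∑ i ∈ Finset.range (N + 1), h i * a i = 0)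
    (hL : ∑ i ∈ Finset.range (N + 1), h i = L)
    (hA0 : 0 ≤ A) :
    A / (L * N) ≤ ∑ i ∈ Finset.range N, (a (i + 1) - a i) ^ 2 := by
  have hLpos : 0 < L := by
    rw [← hL]
    exact Finset.sum_pos (fun i hi => hpos i (Nat.lt_succ_iff.mp (Finset.mem_range.mp hi)))
      ⟨0, Finset.mem_range.mpr (Nat.succ_pos N)⟩
  have hNpos : (0:ℝ) < N := by exact_mod_cast hN
  have hLN : (0:ℝ) < L * N := mul_pos hLpos hNpos
  -- max index
  obtain ⟨k, hk, hkmax⟩ := Finset.exists_max_image (Finset.range (N + 1)) (fun i => |a i|)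
    ⟨0, Finset.mem_range.mpr (Nat.succ_pos N)⟩
  -- A ≤ L * (a k)^2
  have hAL : A ≤ L * (a k) ^ 2 := by
    rw [← hA, ← hL, Finset.sum_mul]
    apply Finset.sum_le_sum
    intro i hi
    have h1 : |a i| ≤ |a k| := hkmax i hi
    have h2 : (a i) ^ 2 ≤ (a k) ^ 2 := by
      rw [← sq_abs (a i), ← sq_abs (a k)]
      exact pow_le_pow_left₀ (abs_nonneg _) h1 2
    exact mul_le_mul_of_nonneg_left h2 (le_of_lt (hpos i (Nat.lt_succ_iff.mp (Finset.mem_range.mp hi))))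
  -- opposite sign index
  have hj : ∃ j ∈ Finset.range (N + 1), a j * a k ≤ 0 := by
    by_contra hc
    push_neg at hc
    have hsum : 0 < ∑ i ∈ Finset.range (N + 1), h i * a i * a k := by
      apply Finset.sum_pos
      · intro i hi
        have := hc i hi
        have hhi := hpos i (Nat.lt_succ_iff.mp (Finset.mem_range.mp hi))
        calc (0:ℝ) < h i * (a i * a k) := mul_pos hhi this
          _ = h i * a i * a k := (mul_assoc _ _ _).symm
      · exact ⟨0, Finset.mem_range.mpr (Nat.succ_pos N)⟩
    rw [← Finset.sum_mul, hzero, zero_mul] at hsum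
    exact lt_irrefl 0 hsum
  obtain ⟨j, hjmem, hjk⟩ := hj
  -- |a k| ≤ |a k - a j|
  have hsq : (a k) ^ 2 ≤ (a k - a j) ^ 2 := by nlinarith [sq_nonneg (a j)]
  -- telescoping bound
  have hkN : k ≤ N := Nat.lt_succ_iff.mp (Finset.mem_range.mp hk)
  have hjN : j ≤ N := Nat.lt_succ_iff.mp (Finset.mem_range.mp hjmem)
  have htel : |a k - a j| ≤ ∑ i ∈ Finset.range N, |a (i + 1) - a i| := by
    have hsub : ∀ p q : ℕ, p ≤ N →
        (∑ i ∈ Finset.Ico q p, |a (i + 1) - a i|) ≤ ∑ i ∈ Finset.range N, |a (i + 1) - a i| := by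
      intro p q hp
      apply Finset.sum_le_sum_of_subset_of_nonneg
      · intro x hx
        rw [Finset.mem_Ico] at hx
        exact Finset.mem_range.mpr (lt_of_lt_of_le hx.2 hp)
      · intro i _ _; exact abs_nonneg _
    rcases le_total j k with hle | hle
    · exact le_trans (tele_aux a j k hle) (hsub k j hkN)
    · rw [abs_sub_comm]
      exact le_trans (tele_aux a k j hle) (hsub j k hjN)
  -- Cauchy–Schwarz
  have hcs : (∑ i ∈ Finset.range N, |a (i + 1) - a i|) ^ 2
      ≤ N * ∑ i ∈ Finset.range N, (a (i + 1) - a i) ^ 2 := by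
    have := sq_sum_le_card_mul_sum_sq (s := Finset.range N) (f := fun i => |a (i + 1) - a i|)
    simpa [sq_abs, Finset.card_range] using this
  have hM2 : (a k) ^ 2 ≤ N * ∑ i ∈ Finset.range N, (a (i + 1) - a i) ^ 2 := by
    calc (a k) ^ 2 ≤ (a k - a j) ^ 2 := hsq
      _ = |a k - a j| ^ 2 := (sq_abs _).symm
      _ ≤ (∑ i ∈ Finset.range N, |a (i + 1) - a i|) ^ 2 :=
          pow_le_pow_left₀ (abs_nonneg _) htel 2
      _ ≤ N * ∑ i ∈ Finset.range N, (a (i + 1) - a i) ^ 2 := hcs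
  rw [div_le_iff₀ hLN]
  calc A ≤ L * (a k) ^ 2 := hAL
    _ ≤ L * (N * ∑ i ∈ Finset.range N, (a (i + 1) - a i) ^ 2) :=
        mul_le_mul_of_nonneg_left hM2 hLpos.le
    _ = (∑ i ∈ Finset.range N, (a (i + 1) - a i) ^ 2) * (L * N) := by ring
end

section
/- Let N ≥ 1 be an integer, let 0 = x₀ < x₁ < ⋯ < x_{N+1} = L be a partition of the interval [0, L] (L > 0), and let w : [0, L] → ℝ be continuous, affine on each subinterval [xᵢ, xᵢ₊₁] with slope sᵢ for i = 0, …, N, and satisfy w(0) = w(L) = 0. Then Σᵢ₌₁^N (sᵢ − sᵢ₋₁)² ≥ (Σᵢ₌₀^N (xᵢ₊₁ − xᵢ) sᵢ²)/(L·N). (Note that Σᵢ₌₀^N (xᵢ₊₁ − xᵢ) sᵢ = w(L) − w(0) = 0, and Σᵢ₌₀^N (xᵢ₊₁ − xᵢ) sᵢ² is the squared H¹(0,L)-seminorm of w.) -/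
/-- The core of Lemma 2.6: for a continuous piecewise linear function `w` on `[0,L]` with
partition `0 = x₀ < x₁ < ⋯ < x_{N+1} = L`, slope `sᵢ` on `[xᵢ, xᵢ₊₁]`, and
`w(0) = w(L) = 0`, the sum of squared slope jumps satisfies
`Σ_{i=1}^N (sᵢ − sᵢ₋₁)² ≥ (Σᵢ (xᵢ₊₁ − xᵢ) sᵢ²)/(L·N)`. -/
theorem stmt_4 (N : ℕ) (hN : 1 ≤ N) (L : ℝ) (hL : 0 < L)
    (x : ℕ → ℝ) (s : ℕ → ℝ) (w : ℝ → ℝ)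
    (hx0 : x 0 = 0) (hxN : x (N + 1) = L)
    (hmono : ∀ i ≤ N, x i < x (i + 1))
    (hcont : ContinuousOn w (Set.Icc 0 L))
    (haff : ∀ i ≤ N, ∀ t ∈ Set.Icc (x i) (x (i + 1)),
      w t = w (x i) + s i * (t - x i))
    (hw0 : w 0 = 0) (hwL : w L = 0) :
    (∑ i ∈ Finset.range (N + 1), (x (i + 1) - x i) * (s i) ^ 2) / (L * N) ≤
      ∑ i ∈ Finset.range N, (s (i + 1) - s i) ^ 2 := by
  set J := ∑ i ∈ Finset.range N, (s (i + 1) - s i) ^ 2 with hJdef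
  have hJ0 : 0 ≤ J := Finset.sum_nonneg fun i _ => sq_nonneg _
  -- telescoping for w
  have hstep : ∀ i ∈ Finset.range (N + 1),
      (fun k => w (x k)) (i + 1) - (fun k => w (x k)) i = (x (i + 1) - x i) * s i := by
    intro i hi
    rw [Finset.mem_range, Nat.lt_succ_iff] at hi
    have h := haff i hi (x (i + 1)) ⟨(hmono i hi).le, le_refl _⟩
    simp only [h]; ring
  have hsum0 : ∑ i ∈ Finset.range (N + 1), (x (i + 1) - x i) * s i = 0 := by
    rw [← Finset.sum_congr rfl hstep, Finset.sum_range_sub (fun k => w (x k))]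
    rw [hxN, hx0, hwL, hw0]; ring
  have hsumL : ∑ i ∈ Finset.range (N + 1), (x (i + 1) - x i) = L := by
    rw [Finset.sum_range_sub x, hxN, hx0]; ring
  have hpos : ∀ i ∈ Finset.range (N + 1), 0 < x (i + 1) - x i := by
    intro i hi
    rw [Finset.mem_range, Nat.lt_succ_iff] at hi
    linarith [hmono i hi]
  have hne : (Finset.range (N + 1)).Nonempty := ⟨0, by simp⟩
  -- existence of nonpositive and nonnegative slopes
  have ha : ∃ a ∈ Finset.range (N + 1), s a ≤ 0 := by
    by_contra h
    push_neg at h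
    have : 0 < ∑ i ∈ Finset.range (N + 1), (x (i + 1) - x i) * s i :=
      Finset.sum_pos (fun i hi => mul_pos (hpos i hi) (h i hi)) hne
    linarith
  have hb : ∃ b ∈ Finset.range (N + 1), 0 ≤ s b := by
    by_contra h
    push_neg at h
    have : ∑ i ∈ Finset.range (N + 1), (x (i + 1) - x i) * s i < 0 :=
      Finset.sum_neg (fun i hi => mul_neg_of_pos_of_neg (hpos i hi) (h i hi)) hne
    linarith
  obtain ⟨a, haR, hsa⟩ := ha
  obtain ⟨b, hbR, hsb⟩ := hb
  rw [Finset.mem_range, Nat.lt_succ_iff] at haR hbR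
  -- key: difference of slopes controlled by N * J
  have hkey : ∀ i ≤ N, ∀ j ≤ N, j ≤ i → (s i - s j) ^ 2 ≤ N * J := by
    intro i hi j hj hij
    have htel : s i - s j = ∑ k ∈ Finset.Ico j i, (s (k + 1) - s k) := by
      rw [Finset.sum_Ico_eq_sub _ hij, Finset.sum_range_sub s, Finset.sum_range_sub s]
      ring
    have hcs : (∑ k ∈ Finset.Ico j i, (s (k + 1) - s k)) ^ 2 ≤
        (Finset.Ico j i).card * ∑ k ∈ Finset.Ico j i, (s (k + 1) - s k) ^ 2 :=
      sq_sum_le_card_mul_sum_sq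
    have hcard : ((Finset.Ico j i).card : ℝ) ≤ N := by
      rw [Nat.card_Ico]
      exact_mod_cast le_trans (Nat.sub_le i j) hi
    have hsub : ∑ k ∈ Finset.Ico j i, (s (k + 1) - s k) ^ 2 ≤ J := by
      apply Finset.sum_le_sum_of_subset_of_nonneg
      · intro k hk
        rw [Finset.mem_Ico] at hk
        rw [Finset.mem_range]
        exact lt_of_lt_of_le hk.2 hi
      · intro k _ _; exact sq_nonneg _
    have hsq0 : (0:ℝ) ≤ ∑ k ∈ Finset.Ico j i, (s (k + 1) - s k) ^ 2 :=
      Finset.sum_nonneg fun k _ => sq_nonneg _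
    calc (s i - s j) ^ 2 = (∑ k ∈ Finset.Ico j i, (s (k + 1) - s k)) ^ 2 := by rw [htel]
      _ ≤ (Finset.Ico j i).card * ∑ k ∈ Finset.Ico j i, (s (k + 1) - s k) ^ 2 := hcs
      _ ≤ N * J := by
          apply mul_le_mul hcard hsub hsq0
          exact_mod_cast Nat.zero_le N
  have hkey2 : ∀ i ≤ N, ∀ j ≤ N, (s i - s j) ^ 2 ≤ N * J := by
    intro i hi j hj
    rcases le_total j i with h | h
    · exact hkey i hi j hj h
    · have := hkey j hj i hi h
      nlinarith [this]
  -- each slope squared bounded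
  have hsbound : ∀ i ≤ N, (s i) ^ 2 ≤ N * J := by
    intro i hi
    rcases le_total 0 (s i) with h | h
    · have := hkey2 i hi a haR
      nlinarith
    · have := hkey2 i hi b hbR
      nlinarith
  -- sum bound
  have hsumbound : ∑ i ∈ Finset.range (N + 1), (x (i + 1) - x i) * (s i) ^ 2 ≤ L * N * J := by
    calc ∑ i ∈ Finset.range (N + 1), (x (i + 1) - x i) * (s i) ^ 2
        ≤ ∑ i ∈ Finset.range (N + 1), (x (i + 1) - x i) * (N * J) := by
          apply Finset.sum_le_sum
          intro i hi
          have : i ≤ N := by rw [Finset.mem_range, Nat.lt_succ_iff] at hi; exact hi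
          exact mul_le_mul_of_nonneg_left (hsbound i this) (hpos i hi).le
      _ = L * N * J := by rw [← Finset.sum_mul, hsumL]; ring
  have hLN : (0:ℝ) < L * N := by
    have : (1:ℝ) ≤ N := by exact_mod_cast hN
    nlinarith
  rw [div_le_iff₀ hLN]
  nlinarith [hsumbound]
end

section
/- Let K = conv{A, B, C} ⊂ ℝ² be a nondegenerate triangle whose interior angle at A is greater than or equal to its interior angles at B and at C (A is a maximum-angle vertex). Let h_K = diam K, let x_K be the orthogonal projection of A onto the line through B and C, let v₁ = (C − B)/‖C − B‖, and let v₂ be a unit vector orthogonal to v₁. Let u : ℝ² → ℝ be twice continuously differentiable with ‖D²u(x)‖ ≤ M (operator norm of the Hessian) for all x ∈ K, and let v_h : ℝ² → ℝ be an affine function satisfying the modified Lagrange interpolation conditions ⟨∇v_h, v₂⟩ = ⟨∇u(x_K), v₂⟩, v_h(B) = u(B), v_h(C) = u(C). Then ∫_K ‖∇u(x) − ∇v_h(x)‖² dx ≤ 13 · h_K² · M² · |K|, where |K| denotes the area of K. -/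
open MeasureTheory
open scoped RealInnerProductSpace

/-- If the angle between two vectors is at most `π/2`, the inner product is nonnegative. -/
lemma aux_inner_nonneg_of_angle_le {x y : E2}
    (h : InnerProductGeometry.angle x y ≤ Real.pi / 2) : 0 ≤ ⟪x, y⟫ := by
  have hc := InnerProductGeometry.cos_angle_mul_norm_mul_norm x y
  rw [← hc]
  have hcos : 0 ≤ Real.cos (InnerProductGeometry.angle x y) :=
    Real.cos_nonneg_of_mem_Icc
      ⟨by linarith [InnerProductGeometry.angle_nonneg x y, Real.pi_pos], h⟩
  positivity

set_option maxHeartbeats 1000000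

/-- Lemma 3.3, estimate (3.5): the modified Lagrange interpolant `v_h` (affine, with
gradient `g` and constant `c`) of a `C²` function `u` on a triangle `K = conv{A,B,C}`
with maximum-angle vertex `A` satisfies
`∫_K ‖∇u − ∇v_h‖² ≤ 13 h_K² M² |K|`, where `M` bounds the operator norm of the Hessian
of `u` on `K`, `x_K` is the foot of the altitude from `A`, and `v₂ ⊥ BC` is a unit
vector. -/
theorem stmt_8 (A B C xK v₂ g : E2) (c M : ℝ)
    (hind : AffineIndependent ℝ ![A, B, C])
    (hmaxB : EuclideanGeometry.angle A B C ≤ EuclideanGeometry.angle B A C)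
    (hmaxC : EuclideanGeometry.angle A C B ≤ EuclideanGeometry.angle B A C)
    (hxK_mem : ∃ t : ℝ, xK = B + t • (C - B))
    (hxK_perp : ⟪A - xK, C - B⟫ = 0)
    (hv₂_unit : ‖v₂‖ = 1)
    (hv₂_perp : ⟪v₂, C - B⟫ = 0)
    (u : E2 → ℝ) (hu : ContDiff ℝ 2 u)
    (hM : ∀ x ∈ convexHull ℝ ({A, B, C} : Set E2), ‖fderiv ℝ (fderiv ℝ u) x‖ ≤ M)
    (hgrad : ⟪g, v₂⟫ = ⟪gradient u xK, v₂⟫)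
    (hB : ⟪g, B⟫ + c = u B)
    (hC : ⟪g, C⟫ + c = u C) :
    ∫ x in convexHull ℝ ({A, B, C} : Set E2), ‖gradient u x - g‖ ^ 2 ≤
      13 * (Metric.diam (convexHull ℝ ({A, B, C} : Set E2))) ^ 2 * M ^ 2 *
        (volume (convexHull ℝ ({A, B, C} : Set E2))).toReal := by
  classical
  set K := convexHull ℝ ({A, B, C} : Set E2) with hKdef
  set D := Metric.diam K with hDdef
  -- distinctness of vertices
  have hinj := hind.injective
  have hAB : A ≠ B := fun h => by
    have : (0 : Fin 3) = 1 := hinj (by simpa using h)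
    simp at this
  have hACne : A ≠ C := fun h => by
    have : (0 : Fin 3) = 2 := hinj (by simpa using h)
    simp at this
  have hBCne : B ≠ C := fun h => by
    have : (1 : Fin 3) = 2 := hinj (by simpa using h)
    simp at this
  have hCB0 : C - B ≠ 0 := sub_ne_zero.2 (Ne.symm hBCne)
  have hnCB : ‖C - B‖ ≠ 0 := norm_ne_zero_iff.2 hCB0
  have hnCBpos : 0 < ‖C - B‖ := norm_pos_iff.2 hCB0
  -- memberships
  have hAK : A ∈ K := subset_convexHull ℝ _ (by simp)
  have hBK : B ∈ K := subset_convexHull ℝ _ (by simp)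
  have hCK : C ∈ K := subset_convexHull ℝ _ (by simp)
  have hsegK : segment ℝ B C ⊆ K := by
    rw [← convexHull_pair]
    exact convexHull_mono (by intro x hx; simp only [Set.mem_insert_iff,
      Set.mem_singleton_iff] at hx ⊢; tauto)
  have hKc : IsCompact K := (Set.toFinite _).isCompact_convexHull ℝ
  have hKconv : Convex ℝ K := convex_convexHull ℝ _
  have hM0 : 0 ≤ M := le_trans (by positivity) (hM A hAK)
  have hD0 : 0 ≤ D := Metric.diam_nonneg
  -- differentiability facts
  have hud : Differentiable ℝ u := hu.differentiable (by norm_num)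
  have hud2 : Differentiable ℝ (fderiv ℝ u) :=
    (hu.fderiv_right (m := 1) (by norm_num)).differentiable one_ne_zero
  -- gradient / fderiv relationship
  have hgi : ∀ z w, ⟪gradient u z, w⟫ = fderiv ℝ u z w := fun z w =>
    InnerProductSpace.toDual_symm_apply
  -- Lipschitz bound for the gradient on K
  have hLip : ∀ x ∈ K, ∀ y ∈ K, ‖gradient u x - gradient u y‖ ≤ M * ‖x - y‖ := by
    intro x hx y hy
    have h1 : ‖fderiv ℝ u x - fderiv ℝ u y‖ ≤ M * ‖x - y‖ :=
      hKconv.norm_image_sub_le_of_norm_fderiv_le (fun z _ => hud2 z) hM hy hx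
    have h2 : gradient u x - gradient u y =
        (InnerProductSpace.toDual ℝ E2).symm (fderiv ℝ u x - fderiv ℝ u y) := by
      simp [gradient, map_sub]
    rw [h2, LinearIsometryEquiv.norm_map]
    exact h1
  -- `xK ∈ K`
  obtain ⟨t, hxt⟩ := hxK_mem
  have hsum := EuclideanGeometry.angle_add_angle_add_angle_eq_pi
    (p₁ := C) (p₂ := A) (p₃ := B) hACne
  rw [EuclideanGeometry.angle_comm C A B, EuclideanGeometry.angle_comm B C A] at hsum
  have hangB : EuclideanGeometry.angle A B C ≤ Real.pi / 2 := by
    have h1 := EuclideanGeometry.angle_nonneg A C B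
    linarith
  have hangC : EuclideanGeometry.angle A C B ≤ Real.pi / 2 := by
    have h1 := EuclideanGeometry.angle_nonneg A B C
    linarith
  have hinnB : 0 ≤ ⟪A - B, C - B⟫ := by
    apply aux_inner_nonneg_of_angle_le
    have : EuclideanGeometry.angle A B C =
        InnerProductGeometry.angle (A - B) (C - B) := by
      simp [EuclideanGeometry.angle, vsub_eq_sub]
    rw [← this]; exact hangB
  have hinnC : 0 ≤ ⟪A - C, B - C⟫ := by
    apply aux_inner_nonneg_of_angle_le
    have : EuclideanGeometry.angle A C B =
        InnerProductGeometry.angle (A - C) (B - C) := by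
      simp [EuclideanGeometry.angle, vsub_eq_sub]
    rw [← this]; exact hangC
  have hteq : ⟪A - B, C - B⟫ = t * ‖C - B‖ ^ 2 := by
    have : A - xK = (A - B) - t • (C - B) := by rw [hxt]; abel
    rw [this, inner_sub_left, real_inner_smul_left,
      real_inner_self_eq_norm_sq] at hxK_perp
    linarith
  have ht0 : 0 ≤ t := by
    rw [hteq] at hinnB
    nlinarith [sq_nonneg ‖C - B‖, pow_pos hnCBpos 2]
  have ht1 : t ≤ 1 := by
    have hexp : ⟪A - C, B - C⟫ = ‖C - B‖ ^ 2 - ⟪A - B, C - B⟫ := by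
      have h1 : A - C = (A - B) - (C - B) := by abel
      have h2 : B - C = -(C - B) := by abel
      rw [h1, h2, inner_neg_right, inner_sub_left, real_inner_self_eq_norm_sq]
      ring
    rw [hexp, hteq] at hinnC
    nlinarith [pow_pos hnCBpos 2]
  have hxKK : xK ∈ K := by
    apply hsegK
    rw [segment_eq_image']
    exact ⟨t, ⟨ht0, ht1⟩, hxt.symm⟩
  -- mean value theorem along BC
  have hgCB : ⟪g, C - B⟫ = u C - u B := by
    rw [inner_sub_right]; linarith
  have hMVT : ∃ p ∈ K, ⟪gradient u p - g, C - B⟫ = 0 := by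
    have hder : ∀ s : ℝ, HasDerivAt (fun s : ℝ => u (B + s • (C - B)))
        (fderiv ℝ u (B + s • (C - B)) (C - B)) s := by
      intro s
      have h1 : HasDerivAt (fun s : ℝ => B + s • (C - B)) (C - B) s := by
        simpa using ((hasDerivAt_id s).smul_const (C - B)).const_add B
      exact (hud _).hasFDerivAt.comp_hasDerivAt s h1
    obtain ⟨ξ, hξmem, hξ⟩ := exists_hasDerivAt_eq_slope
      (fun s : ℝ => u (B + s • (C - B)))
      (fun s : ℝ => fderiv ℝ u (B + s • (C - B)) (C - B))
      (by norm_num : (0:ℝ) < 1)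
      (fun s _ => (hder s).continuousAt.continuousWithinAt)
      (fun s _ => hder s)
    refine ⟨B + ξ • (C - B), hsegK ?_, ?_⟩
    · rw [segment_eq_image']
      exact ⟨ξ, ⟨le_of_lt hξmem.1, le_of_lt hξmem.2⟩, rfl⟩
    · rw [inner_sub_left, hgi, hgCB]
      simp only [one_smul, zero_smul, add_zero] at hξ
      rw [hξ]
      have : B + (C - B) = C := by abel
      rw [this]
      ring
  obtain ⟨p, hpK, hpeq⟩ := hMVT
  -- orthonormal basis ![v₁, v₂]
  set v₁ : E2 := ‖C - B‖⁻¹ • (C - B) with hv₁def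
  have hv₁ : ‖v₁‖ = 1 := by
    rw [hv₁def, norm_smul, norm_inv, norm_norm, inv_mul_cancel₀ hnCB]
  have h12 : ⟪v₁, v₂⟫ = 0 := by
    rw [hv₁def, real_inner_smul_left, real_inner_comm, hv₂_perp, mul_zero]
  have h11 : ⟪v₁, v₁⟫ = 1 := by
    rw [real_inner_self_eq_norm_sq, hv₁]; norm_num
  have h22 : ⟪v₂, v₂⟫ = 1 := by
    rw [real_inner_self_eq_norm_sq, hv₂_unit]; norm_num
  have h21 : ⟪v₂, v₁⟫ = 0 := by rw [real_inner_comm]; exact h12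
  have horth : Orthonormal ℝ ![v₁, v₂] := by
    rw [orthonormal_iff_ite]
    intro i j
    fin_cases i <;> fin_cases j <;>
      simp [h11, h12, h21, h22, hv₁, hv₂_unit]
  have hspan : ⊤ ≤ Submodule.span ℝ (Set.range ![v₁, v₂]) := by
    rw [horth.linearIndependent.span_eq_top_of_card_eq_finrank
      (by simp [finrank_euclideanSpace_fin])]
  let b : OrthonormalBasis (Fin 2) ℝ E2 := OrthonormalBasis.mk horth hspan
  have hbcoe : ⇑b = ![v₁, v₂] := OrthonormalBasis.coe_mk horth hspan
  have hb0 : b 0 = v₁ := by rw [hbcoe]; rfl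
  have hb1 : b 1 = v₂ := by rw [hbcoe]; rfl
  -- pointwise bound
  have hpt : ∀ x ∈ K, ‖gradient u x - g‖ ^ 2 ≤ 2 * D ^ 2 * M ^ 2 := by
    intro x hx
    set w := gradient u x - g with hwdef
    have hdistxK : ‖x - xK‖ ≤ D := by
      rw [← dist_eq_norm]
      exact Metric.dist_le_diam_of_mem hKc.isBounded hx hxKK
    have hdistp : ‖x - p‖ ≤ D := by
      rw [← dist_eq_norm]
      exact Metric.dist_le_diam_of_mem hKc.isBounded hx hpK
    have hc₂ : |⟪w, v₂⟫| ≤ M * D := by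
      have heq : ⟪w, v₂⟫ = ⟪gradient u x - gradient u xK, v₂⟫ := by
        rw [hwdef, inner_sub_left, inner_sub_left, hgrad]
      rw [heq]
      calc |⟪gradient u x - gradient u xK, v₂⟫|
          ≤ ‖gradient u x - gradient u xK‖ * ‖v₂‖ := abs_real_inner_le_norm _ _
        _ = ‖gradient u x - gradient u xK‖ := by rw [hv₂_unit, mul_one]
        _ ≤ M * ‖x - xK‖ := hLip x hx xK hxKK
        _ ≤ M * D := by exact mul_le_mul_of_nonneg_left hdistxK hM0
    have hc₁ : |⟪w, v₁⟫| ≤ M * D := by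
      have heq : ⟪w, C - B⟫ = ⟪gradient u x - gradient u p, C - B⟫ := by
        have : w = (gradient u x - gradient u p) + (gradient u p - g) := by
          rw [hwdef]; abel
        rw [this, inner_add_left, hpeq, add_zero]
      have hbound : |⟪w, C - B⟫| ≤ M * D * ‖C - B‖ := by
        rw [heq]
        calc |⟪gradient u x - gradient u p, C - B⟫|
            ≤ ‖gradient u x - gradient u p‖ * ‖C - B‖ := abs_real_inner_le_norm _ _
          _ ≤ (M * ‖x - p‖) * ‖C - B‖ :=
              mul_le_mul_of_nonneg_right (hLip x hx p hpK) (norm_nonneg _)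
          _ ≤ M * D * ‖C - B‖ := by
              apply mul_le_mul_of_nonneg_right _ (norm_nonneg _)
              exact mul_le_mul_of_nonneg_left hdistp hM0
      rw [hv₁def, real_inner_smul_right, abs_mul, abs_inv, abs_norm]
      rw [inv_mul_le_iff₀ hnCBpos]
      calc |⟪w, C - B⟫| ≤ M * D * ‖C - B‖ := hbound
        _ = ‖C - B‖ * (M * D) := by ring
    have hpars : ‖w‖ ^ 2 = ⟪w, v₁⟫ ^ 2 + ⟪w, v₂⟫ ^ 2 := by
      have := b.sum_inner_mul_inner w w
      rw [Fin.sum_univ_two, hb0, hb1] at this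
      rw [← real_inner_self_eq_norm_sq, ← this,
        real_inner_comm v₁ w, real_inner_comm v₂ w]
      ring
    rw [hpars]
    have h1 : ⟪w, v₁⟫ ^ 2 ≤ (M * D) ^ 2 := by
      rw [← sq_abs]; exact pow_le_pow_left₀ (abs_nonneg _) hc₁ 2
    have h2 : ⟪w, v₂⟫ ^ 2 ≤ (M * D) ^ 2 := by
      rw [← sq_abs]; exact pow_le_pow_left₀ (abs_nonneg _) hc₂ 2
    nlinarith
  -- integrate
  have hKm : MeasurableSet K := hKc.isClosed.measurableSet
  have hvol : volume K < ⊤ := hKc.measure_lt_top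
  have hnormint : ‖∫ x in K, ‖gradient u x - g‖ ^ 2‖ ≤
      (2 * D ^ 2 * M ^ 2) * (volume K).toReal := by
    apply norm_setIntegral_le_of_norm_le_const_ae' hvol
    filter_upwards with x hx
    rw [Real.norm_of_nonneg (by positivity)]
    exact hpt x hx
  have hint : ∫ x in K, ‖gradient u x - g‖ ^ 2 ≤
      (2 * D ^ 2 * M ^ 2) * (volume K).toReal :=
    le_trans (le_abs_self _) (by rwa [← Real.norm_eq_abs])
  have hfin : (2 * D ^ 2 * M ^ 2) * (volume K).toReal ≤
      13 * D ^ 2 * M ^ 2 * (volume K).toReal := by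
    have : (0:ℝ) ≤ D ^ 2 * M ^ 2 * (volume K).toReal := by positivity
    nlinarith
  exact le_trans hint hfin
end

section
/- Let K = conv{A, B, C} ⊂ ℝ² be a nondegenerate triangle whose interior angle at A is greater than or equal to its interior angles at B and at C (A is a maximum-angle vertex). Let x_K be the orthogonal projection of A onto the line through B and C, let v₁ = (C − B)/‖C − B‖, and let v₂ be a unit vector orthogonal to v₁. Let u : ℝ² → ℝ be twice continuously differentiable with ‖D²u(x)‖ ≤ M (operator norm of the Hessian) for all x ∈ K, and let v_h : ℝ² → ℝ be an affine function satisfying ⟨∇v_h, v₂⟩ = ⟨∇u(x_K), v₂⟩, v_h(B) = u(B), v_h(C) = u(C). Then |u(A) − v_h(A)| ≤ (‖x_K − B‖ · ‖x_K − C‖ + ‖x_K − A‖²) · M. -/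
open scoped RealInnerProductSpace

-- quadratic Taylor-type bound
lemma taylor_bound {u : E2 → ℝ} (hu : ContDiff ℝ 2 u) {s : Set E2} (hs : Convex ℝ s)
    {M : ℝ} (hM : ∀ x ∈ s, ‖fderiv ℝ (fderiv ℝ u) x‖ ≤ M)
    {x y : E2} (hx : x ∈ s) (hy : y ∈ s) :
    |u y - u x - fderiv ℝ u x (y - x)| ≤ M * ‖y - x‖ ^ 2 := by
  have hdu : Differentiable ℝ u := hu.differentiable two_ne_zero
  have hdu' : Differentiable ℝ (fderiv ℝ u) :=
    (hu.fderiv_right (m := 1) le_rfl).differentiable one_ne_zero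
  have hMnn : 0 ≤ M := le_trans (norm_nonneg (fderiv ℝ (fderiv ℝ u) x)) (hM x hx)
  have hseg : segment ℝ x y ⊆ s := hs.segment_subset hx hy
  have hlip : ∀ z ∈ segment ℝ x y, ‖fderiv ℝ u z - fderiv ℝ u x‖ ≤ M * ‖y - x‖ := by
    intro z hz
    have h1 : ‖fderiv ℝ u z - fderiv ℝ u x‖ ≤ M * ‖z - x‖ :=
      hs.norm_image_sub_le_of_norm_fderiv_le (fun w hw => hdu' w)
        (fun w hw => hM w hw) hx (hseg hz)
    have h2 : ‖z - x‖ ≤ ‖y - x‖ := by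
      obtain ⟨a, b, ha, hb, hab, rfl⟩ := hz
      have ha1 : a = 1 - b := by linarith
      subst ha1
      have hz : (1 - b) • x + b • y - x = b • (y - x) := by module
      rw [hz, norm_smul, Real.norm_eq_abs, abs_of_nonneg hb]
      exact mul_le_of_le_one_left (norm_nonneg _) (by linarith)
    exact h1.trans (by nlinarith [norm_nonneg (y - x)])
  have key := (convex_segment x y).norm_image_sub_le_of_norm_fderiv_le'
    (f := u) (φ := fderiv ℝ u x) (fun z hz => hdu z) hlip (left_mem_segment ℝ x y)
    (right_mem_segment ℝ x y)
  rw [Real.norm_eq_abs] at key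
  calc |u y - u x - (fderiv ℝ u x) (y - x)| ≤ M * ‖y - x‖ * ‖y - x‖ := key
    _ = M * ‖y - x‖ ^ 2 := by ring
set_option maxHeartbeats 2000000 in
/-- Lemma 3.3, vertex estimate (3.6): the modified Lagrange interpolant `v_h` (affine,
with gradient `g` and constant `c`) of a `C²` function `u` on a triangle
`K = conv{A,B,C}` with maximum-angle vertex `A` satisfies
`|u(A) − v_h(A)| ≤ (‖x_K − B‖·‖x_K − C‖ + ‖x_K − A‖²) M`, where `M` bounds the operator
norm of the Hessian of `u` on `K` and `x_K` is the foot of the altitude from `A`. -/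
theorem stmt_9 (A B C xK v₂ g : E2) (c M : ℝ)
    (hind : AffineIndependent ℝ ![A, B, C])
    (hmaxB : EuclideanGeometry.angle A B C ≤ EuclideanGeometry.angle B A C)
    (hmaxC : EuclideanGeometry.angle A C B ≤ EuclideanGeometry.angle B A C)
    (hxK_mem : ∃ t : ℝ, xK = B + t • (C - B))
    (hxK_perp : ⟪A - xK, C - B⟫ = 0)
    (hv₂_unit : ‖v₂‖ = 1)
    (hv₂_perp : ⟪v₂, C - B⟫ = 0)
    (u : E2 → ℝ) (hu : ContDiff ℝ 2 u)
    (hM : ∀ x ∈ convexHull ℝ ({A, B, C} : Set E2), ‖fderiv ℝ (fderiv ℝ u) x‖ ≤ M)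
    (hgrad : ⟪g, v₂⟫ = ⟪gradient u xK, v₂⟫)
    (hB : ⟪g, B⟫ + c = u B)
    (hC : ⟪g, C⟫ + c = u C) :
    |u A - (⟪g, A⟫ + c)| ≤ (‖xK - B‖ * ‖xK - C‖ + ‖xK - A‖ ^ 2) * M := by
  classical
  -- distinctness and non-collinearity
  have hNC : ¬Collinear ℝ ({A, B, C} : Set E2) :=
    affineIndependent_iff_not_collinear_set.mp hind
  have hBA : B ≠ A := by
    intro h; exact hNC (by rw [h]; exact (collinear_pair ℝ A C).subset (by simp [Set.insert_subset_iff]))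
  have hCA : C ≠ A := by
    intro h; exact hNC (by rw [h]; exact (collinear_pair ℝ A B).subset (by simp [Set.insert_subset_iff]))
  have hCB' : C ≠ B := by
    intro h; exact hNC (by rw [h]; exact (collinear_pair ℝ A B).subset (by simp [Set.insert_subset_iff]))
  -- angle sum and acuteness at B and C
  have hsum := EuclideanGeometry.angle_add_angle_add_angle_eq_pi C hBA
  have hposC : 0 < EuclideanGeometry.angle A C B := by
    apply EuclideanGeometry.angle_pos_of_not_collinear
    intro h; exact hNC (h.subset (by intro x hx; simp at hx ⊢; tauto))
  have hposB : 0 < EuclideanGeometry.angle A B C := by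
    apply EuclideanGeometry.angle_pos_of_not_collinear
    intro h; exact hNC (h.subset (by intro x hx; simp at hx ⊢; tauto))
  have hcommCA : EuclideanGeometry.angle C A B = EuclideanGeometry.angle B A C :=
    EuclideanGeometry.angle_comm _ _ _
  have hcommBC : EuclideanGeometry.angle B C A = EuclideanGeometry.angle A C B :=
    EuclideanGeometry.angle_comm _ _ _
  rw [hcommCA, hcommBC] at hsum
  have hB2 : EuclideanGeometry.angle A B C < Real.pi / 2 := by
    linarith only [hsum, hmaxB, hposC]
  have hC2 : EuclideanGeometry.angle A C B < Real.pi / 2 := by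
    linarith only [hsum, hmaxC, hposB]
  -- inner product nonnegativity
  have hinner : ∀ P Q R : E2, EuclideanGeometry.angle P Q R < Real.pi / 2 →
      0 ≤ ⟪P - Q, R - Q⟫ := by
    intro P Q R hangle
    have := InnerProductGeometry.cos_angle_mul_norm_mul_norm (P - Q) (R - Q)
    rw [← this]
    have hnn : 0 ≤ InnerProductGeometry.angle (P - Q) (R - Q) :=
      InnerProductGeometry.angle_nonneg _ _
    have heq : EuclideanGeometry.angle P Q R
        = InnerProductGeometry.angle (P - Q) (R - Q) := by
      rw [EuclideanGeometry.angle, vsub_eq_sub, vsub_eq_sub]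
    rw [heq] at hangle
    have hcos : 0 ≤ Real.cos (InnerProductGeometry.angle (P - Q) (R - Q)) :=
      Real.cos_nonneg_of_mem_Icc ⟨by linarith only [Real.pi_pos, hnn], le_of_lt hangle⟩
    exact mul_nonneg hcos (mul_nonneg (norm_nonneg _) (norm_nonneg _))
  have hinnerB : 0 ≤ ⟪A - B, C - B⟫ := hinner A B C hB2
  have hinnerC : 0 ≤ ⟪A - C, B - C⟫ := hinner A C B hC2
  -- parameter t
  obtain ⟨t, hxK⟩ := hxK_mem
  have hCB : C - B ≠ 0 := sub_ne_zero.mpr hCB'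
  set L : ℝ := ‖C - B‖ with hLdef
  have hL : 0 < L := norm_pos_iff.mpr hCB
  have hinnA : ⟪A - B, C - B⟫ = t * L ^ 2 := by
    have h1 : A - xK = (A - B) - t • (C - B) := by rw [hxK]; module
    rw [h1, inner_sub_left, real_inner_smul_left, real_inner_self_eq_norm_sq] at hxK_perp
    linarith only [hxK_perp]
  have hinnC' : ⟪A - C, B - C⟫ = (1 - t) * L ^ 2 := by
    have h1 : A - C = (A - B) + -(C - B) := by module
    have h2 : B - C = -(C - B) := by module
    rw [h1, h2, inner_add_left, inner_neg_neg, inner_neg_right,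
      real_inner_self_eq_norm_sq, hinnA]
    ring
  have hL2 : 0 < L ^ 2 := pow_pos hL 2
  have ht0 : 0 ≤ t := (mul_nonneg_iff_of_pos_right hL2).mp (hinnA ▸ hinnerB)
  have ht1 : t ≤ 1 := by
    have h1t : 0 ≤ (1 - t) * L ^ 2 := hinnC' ▸ hinnerC
    have := (mul_nonneg_iff_of_pos_right hL2).mp h1t
    linarith only [this]
  -- memberships in K
  set K := convexHull ℝ ({A, B, C} : Set E2) with hKdef
  have hKconv : Convex ℝ K := convex_convexHull ℝ _
  have hAm : A ∈ K := subset_convexHull ℝ _ (by simp)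
  have hBm : B ∈ K := subset_convexHull ℝ _ (by simp)
  have hCm : C ∈ K := subset_convexHull ℝ _ (by simp)
  have hxK' : xK = (1 - t) • B + t • C := by rw [hxK]; module
  have hxKm : xK ∈ K := by
    rw [hxK']
    exact hKconv hBm hCm (by linarith only [ht1]) ht0 (by ring)
  have hMnn : 0 ≤ M := le_trans (norm_nonneg (fderiv ℝ (fderiv ℝ u) A)) (hM A hAm)
  -- decompose A - xK along v₂
  have hv₂W : v₂ ∈ (ℝ ∙ (C - B))ᗮ :=
    Submodule.mem_orthogonal_singleton_iff_inner_right.mpr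
      (by rw [real_inner_comm]; exact hv₂_perp)
  have hAxKW : A - xK ∈ (ℝ ∙ (C - B))ᗮ :=
    Submodule.mem_orthogonal_singleton_iff_inner_right.mpr
      (by rw [real_inner_comm]; exact hxK_perp)
  have hv₂ne : v₂ ≠ 0 := by
    intro h; rw [h, norm_zero] at hv₂_unit; norm_num at hv₂_unit
  have hdimW : Module.finrank ℝ ((ℝ ∙ (C - B))ᗮ : Submodule ℝ E2) = 1 := by
    have h1 := Submodule.finrank_add_finrank_orthogonal (K := (ℝ ∙ (C - B) : Submodule ℝ E2))
    rw [finrank_span_singleton hCB] at h1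
    have h2 : Module.finrank ℝ E2 = 2 := finrank_euclideanSpace_fin
    omega
  have hspan : (ℝ ∙ v₂) = (ℝ ∙ (C - B))ᗮ := by
    apply Submodule.eq_of_le_of_finrank_le
      ((Submodule.span_singleton_le_iff_mem _ _).mpr hv₂W)
    rw [hdimW, finrank_span_singleton hv₂ne]
  obtain ⟨sc, hsc⟩ := Submodule.mem_span_singleton.mp (hspan ▸ hAxKW)
  -- derivative identity at xK in direction A - xK
  set D := fderiv ℝ u xK with hDdef
  have hgradv : ⟪gradient u xK, v₂⟫ = D v₂ := InnerProductSpace.toDual_symm_apply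
  have hDA : D (A - xK) = ⟪g, A - xK⟫ := by
    rw [← hsc, map_smul, real_inner_smul_right, smul_eq_mul, hgrad, hgradv]
  -- Taylor estimates
  have h1 := taylor_bound hu hKconv hM hxKm hBm
  have h2 := taylor_bound hu hKconv hM hxKm hCm
  have h3 := taylor_bound hu hKconv hM hxKm hAm
  rw [← hDdef] at h1 h2 h3
  have hBxK : B - xK = (-t) • (C - B) := by rw [hxK]; module
  have hCxK : C - xK = (1 - t) • (C - B) := by rw [hxK]; module
  set d := D (C - B) with hddef
  have hDB : D (B - xK) = -t * d := by rw [hBxK, map_smul]; simp [hddef]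
  have hDC : D (C - xK) = (1 - t) * d := by rw [hCxK, map_smul]; simp [hddef]
  have hnB : ‖B - xK‖ ^ 2 = t ^ 2 * L ^ 2 := by
    rw [hBxK, norm_smul, mul_pow, Real.norm_eq_abs, sq_abs, ← hLdef]
    ring
  have hnC : ‖C - xK‖ ^ 2 = (1 - t) ^ 2 * L ^ 2 := by
    rw [hCxK, norm_smul, mul_pow, Real.norm_eq_abs, sq_abs, ← hLdef]
  rw [hDB, hnB] at h1
  rw [hDC, hnC] at h2
  rw [hDA] at h3
  -- abbreviations
  set a1 := u B - u xK - -t * d with ha1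
  set a2 := u C - u xK - (1 - t) * d with ha2
  set a3 := u A - u xK - ⟪g, A - xK⟫ with ha3
  -- affine part at xK
  have hgxK : ⟪g, xK⟫ = (1 - t) * ⟪g, B⟫ + t * ⟪g, C⟫ := by
    rw [hxK', inner_add_right, real_inner_smul_right, real_inner_smul_right]
  have hgA : ⟪g, A - xK⟫ = ⟪g, A⟫ - ⟪g, xK⟫ := inner_sub_right _ _ _
  -- key identity
  have hiden : u A - (⟪g, A⟫ + c) = a3 - ((1 - t) * a1 + t * a2) := by
    rw [ha3, ha1, ha2, hgA, hgxK]
    have e1 : ⟪g, B⟫ = u B - c := by linarith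
    have e2 : ⟪g, C⟫ = u C - c := by linarith
    rw [e1, e2]; ring
  -- norms on the right-hand side
  have hxKB : ‖xK - B‖ = t * L := by
    have : xK - B = t • (C - B) := by rw [hxK]; module
    rw [this, norm_smul, Real.norm_eq_abs, abs_of_nonneg ht0, ← hLdef]
  have hxKC : ‖xK - C‖ = (1 - t) * L := by
    have : xK - C = (t - 1) • (C - B) := by rw [hxK]; module
    rw [this, norm_smul, Real.norm_eq_abs, abs_of_nonpos (by linarith only [ht1]), ← hLdef]
    ring
  have hxKA : ‖xK - A‖ ^ 2 = ‖A - xK‖ ^ 2 := by rw [norm_sub_rev]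
  -- combine
  rw [hiden, hxKB, hxKC, hxKA]
  have habs : |a3 - ((1 - t) * a1 + t * a2)| ≤ |a3| + (1 - t) * |a1| + t * |a2| := by
    calc |a3 - ((1 - t) * a1 + t * a2)| ≤ |a3| + |(1 - t) * a1 + t * a2| := abs_sub a3 ((1 - t) * a1 + t * a2)
      _ ≤ |a3| + (|(1 - t) * a1| + |t * a2|) := by
          gcongr; exact abs_add_le _ _
      _ = |a3| + (1 - t) * |a1| + t * |a2| := by
          rw [abs_mul, abs_mul, abs_of_nonneg (by linarith only [ht1] : (0:ℝ) ≤ 1 - t), abs_of_nonneg ht0]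
          ring
  have e1 : (1 - t) * |a1| ≤ (1 - t) * (M * (t ^ 2 * L ^ 2)) :=
    mul_le_mul_of_nonneg_left h1 (by linarith only [ht1])
  have e2 : t * |a2| ≤ t * (M * ((1 - t) ^ 2 * L ^ 2)) :=
    mul_le_mul_of_nonneg_left h2 ht0
  calc |a3 - ((1 - t) * a1 + t * a2)|
      ≤ |a3| + (1 - t) * |a1| + t * |a2| := habs
    _ ≤ M * ‖A - xK‖ ^ 2 + (1 - t) * (M * (t ^ 2 * L ^ 2)) + t * (M * ((1 - t) ^ 2 * L ^ 2)) := by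
        linarith only [h3, e1, e2]
    _ = (t * L * ((1 - t) * L) + ‖A - xK‖ ^ 2) * M := by ring
end

section
/- Let u : ℝ² → ℝ be twice continuously differentiable with ‖D²u(x)‖ ≤ M (operator norm of the Hessian) for all x ∈ ℝ², let x₀ ∈ ℝ² and r > 0, let v(x) = u(x₀) + ⟨∇u(x₀), x − x₀⟩ be the tangent plane of u at x₀, and define w : ℝ² → ℝ by w(x) = (v(x) − u(x)) · ψ_r(x − x₀). Then: (a) w(x) = v(x) − u(x) whenever ‖x − x₀‖ ≤ r, and w(x) = 0 whenever ‖x − x₀‖ ≥ 2r; (b) ∫_{ℝ²} ‖∇w(x)‖² dx ≤ 1600 π r⁴ M²; (c) ∫ ‖D²w(x)‖_F² dx ≤ 4 · 149² · π r² M², the last integral taken over the (full-measure) set of points where w is twice differentiable. -/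
open MeasureTheory
open scoped RealInnerProductSpace

set_option maxHeartbeats 1600000
set_option synthInstance.maxHeartbeats 800000

/-- The spline `ψ̃`: `1` on `[0,1]`, `2(x−2)³ + 3(x−2)²` on `[1,2]`, `0` for `x > 2`. -/
noncomputable def psiTilde (x : ℝ) : ℝ :=
  if x ≤ 1 then 1 else if x ≤ 2 then 2 * (x - 2) ^ 3 + 3 * (x - 2) ^ 2 else 0

/-- The radial 'table mountain' bump `ψ_r(x) = ψ̃(‖x‖/r)` on `ℝ²`. -/
noncomputable def psiR (r : ℝ) (x : E2) : ℝ :=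
  psiTilde (‖x‖ / r)

/-- Frobenius norm of a bilinear form on `ℝ²` (e.g. a Hessian), computed in the standard
orthonormal basis. -/
noncomputable def frobNorm (f : E2 →L[ℝ] E2 →L[ℝ] ℝ) : ℝ :=
  Real.sqrt (∑ i : Fin 2, ∑ j : Fin 2,
    (f (EuclideanSpace.single i 1) (EuclideanSpace.single j 1)) ^ 2)

/-! ### Auxiliary lemmas about `psiTilde` -/

noncomputable def psiD (t : ℝ) : ℝ :=
  if t ≤ 1 then 0 else if t ≤ 2 then 6 * (t - 2) ^ 2 + 6 * (t - 2) else 0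

lemma psiTilde_of_le {t : ℝ} (h : t ≤ 1) : psiTilde t = 1 := if_pos h

lemma psiTilde_of_mem {t : ℝ} (h1 : 1 ≤ t) (h2 : t ≤ 2) :
    psiTilde t = 2 * (t - 2) ^ 3 + 3 * (t - 2) ^ 2 := by
  unfold psiTilde
  rcases eq_or_lt_of_le h1 with h | h
  · rw [if_pos h.symm.le]; nlinarith [h.symm]
  · rw [if_neg (not_le.mpr h), if_pos h2]

lemma psiTilde_of_ge {t : ℝ} (h : 2 ≤ t) : psiTilde t = 0 := by
  unfold psiTilde
  rcases eq_or_lt_of_le h with h' | h'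
  · rw [if_neg (by linarith), if_pos h'.symm.le]; rw [← h']; ring
  · rw [if_neg (by linarith), if_neg (not_le.mpr h')]

lemma cubic_hasDerivAt (t : ℝ) :
    HasDerivAt (fun s : ℝ => 2 * (s - 2) ^ 3 + 3 * (s - 2) ^ 2)
      (6 * (t - 2) ^ 2 + 6 * (t - 2)) t := by
  have h := (hasDerivAt_id t).sub_const 2
  refine (((h.pow 3).const_mul 2).add ((h.pow 2).const_mul 3)).congr_deriv ?_
  simp only [id]
  ring

lemma psiTilde_hasDerivAt (t : ℝ) : HasDerivAt psiTilde (psiD t) t := by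
  rcases lt_trichotomy t 1 with h | h | h
  · have he : psiTilde =ᶠ[nhds t] fun _ => 1 := by
      filter_upwards [Iio_mem_nhds h] with s hs
      exact psiTilde_of_le (le_of_lt hs)
    have : psiD t = 0 := if_pos h.le
    rw [this]
    exact (hasDerivAt_const t 1).congr_of_eventuallyEq he
  · subst h
    have h1 : HasDerivWithinAt psiTilde 0 (Set.Iic 1) 1 := by
      refine (hasDerivAt_const (1:ℝ) (1:ℝ)).hasDerivWithinAt.congr ?_ ?_
      · exact fun s hs => psiTilde_of_le hs
      · exact psiTilde_of_le le_rfl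
    have h2 : HasDerivWithinAt psiTilde 0 (Set.Icc 1 2) 1 := by
      have := (cubic_hasDerivAt 1).hasDerivWithinAt (s := Set.Icc 1 2)
      have h0 : (6:ℝ) * (1 - 2) ^ 2 + 6 * (1 - 2) = 0 := by norm_num
      rw [h0] at this
      exact this.congr (fun s hs => psiTilde_of_mem hs.1 hs.2) (psiTilde_of_mem le_rfl (by norm_num))
    have hu := h1.union h2
    rw [Set.Iic_union_Icc_eq_Iic (by norm_num : (1:ℝ) ≤ 2)] at hu
    have : psiD 1 = 0 := if_pos le_rfl
    rw [this]
    exact hu.hasDerivAt (Iic_mem_nhds (by norm_num))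
  rcases lt_trichotomy t 2 with h' | h' | h'
  · have he : psiTilde =ᶠ[nhds t] fun s => 2 * (s - 2) ^ 3 + 3 * (s - 2) ^ 2 := by
      filter_upwards [Ioo_mem_nhds h h'] with s hs
      exact psiTilde_of_mem hs.1.le hs.2.le
    have : psiD t = 6 * (t - 2) ^ 2 + 6 * (t - 2) := by
      rw [psiD, if_neg (not_le.mpr h), if_pos h'.le]
    rw [this]
    exact (cubic_hasDerivAt t).congr_of_eventuallyEq he
  · subst h'
    have h2 : HasDerivWithinAt psiTilde 0 (Set.Icc 1 2) 2 := by
      have := (cubic_hasDerivAt 2).hasDerivWithinAt (s := Set.Icc 1 2)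
      have h0 : (6:ℝ) * (2 - 2) ^ 2 + 6 * (2 - 2) = 0 := by norm_num
      rw [h0] at this
      exact this.congr (fun s hs => psiTilde_of_mem hs.1 hs.2) (psiTilde_of_mem (by norm_num) le_rfl)
    have h3 : HasDerivWithinAt psiTilde 0 (Set.Ici 2) 2 := by
      refine (hasDerivAt_const (2:ℝ) (0:ℝ)).hasDerivWithinAt.congr ?_ ?_
      · exact fun s hs => psiTilde_of_ge hs
      · exact psiTilde_of_ge le_rfl
    have hu := h2.union h3
    rw [Set.Icc_union_Ici_eq_Ici (by norm_num : (1:ℝ) ≤ 2)] at hu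
    have : psiD 2 = 0 := by rw [psiD, if_neg (by norm_num), if_pos le_rfl]; norm_num
    rw [this]
    exact hu.hasDerivAt (Ici_mem_nhds (by norm_num))
  · have he : psiTilde =ᶠ[nhds t] fun _ => 0 := by
      filter_upwards [Ioi_mem_nhds h'] with s hs
      exact psiTilde_of_ge (le_of_lt hs)
    have : psiD t = 0 := by rw [psiD, if_neg (by linarith), if_neg (not_le.mpr h')]
    rw [this]
    exact (hasDerivAt_const t 0).congr_of_eventuallyEq he

lemma psiD_abs_le (t : ℝ) : |psiD t| ≤ 3 / 2 := by
  rw [psiD]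
  split_ifs with h1 h2
  · norm_num
  · push_neg at h1
    rw [abs_le]
    constructor
    · nlinarith [sq_nonneg (t - 3/2)]
    · nlinarith [mul_nonneg (sub_nonneg.mpr h2) (sub_nonneg.mpr h1.le)]
  · norm_num

lemma psiD_of_le {t : ℝ} (h : t ≤ 1) : psiD t = 0 := if_pos h

lemma psiD_of_ge {t : ℝ} (h : 2 ≤ t) : psiD t = 0 := by
  rcases eq_or_lt_of_le h with h' | h'
  · rw [psiD, if_neg (by linarith), if_pos h'.symm.le]; rw [← h']; ring
  · rw [psiD, if_neg (by linarith), if_neg (not_le.mpr h')]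

lemma psiD_of_mem {t : ℝ} (h1 : 1 < t) (h2 : t ≤ 2) :
    psiD t = 6 * (t - 2) ^ 2 + 6 * (t - 2) := by
  rw [psiD, if_neg (not_le.mpr h1), if_pos h2]

lemma psiTilde_mem_Icc (t : ℝ) : psiTilde t ∈ Set.Icc (0:ℝ) 1 := by
  rw [psiTilde]
  split_ifs with h1 h2
  · exact ⟨zero_le_one, le_rfl⟩
  · push_neg at h1
    constructor
    · nlinarith
    · nlinarith [sq_nonneg (t - 1)]
  · exact ⟨le_rfl, zero_le_one⟩

/-! ### Derivative of the norm and of `psiR` -/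

lemma norm_hasFDerivAt {x : E2} (hx : x ≠ 0) :
    HasFDerivAt (fun y : E2 => ‖y‖) (‖x‖⁻¹ • innerSL ℝ x) x := by
  have hx2 : ‖x‖ ^ 2 ≠ 0 := pow_ne_zero _ (norm_ne_zero_iff.mpr hx)
  have h := (hasStrictFDerivAt_norm_sq x).hasFDerivAt.sqrt hx2
  have he : (fun y : E2 => Real.sqrt (‖y‖ ^ 2)) = fun y : E2 => ‖y‖ := by
    funext y; rw [Real.sqrt_sq (norm_nonneg y)]
  rw [he] at h
  refine h.congr_fderiv ?_
  ext z
  simp [Real.sqrt_sq (norm_nonneg x)]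
  ring

noncomputable def psiR' (r : ℝ) (y : E2) : E2 →L[ℝ] ℝ :=
  (psiD (‖y‖ / r) / (r * ‖y‖)) • innerSL ℝ y

lemma psiR'_eq_zero_of_le {r : ℝ} {y : E2} (h : ‖y‖ ≤ r) (hr : 0 < r) : psiR' r y = 0 := by
  rw [psiR', psiD_of_le (by rw [div_le_one hr]; exact h), zero_div, zero_smul]

lemma psiR'_eq_zero_of_ge {r : ℝ} {y : E2} (h : 2 * r ≤ ‖y‖) (hr : 0 < r) : psiR' r y = 0 := by
  rw [psiR', psiD_of_ge (by rw [le_div_iff₀ hr]; linarith), zero_div, zero_smul]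

lemma psiR_hasFDerivAt {r : ℝ} (hr : 0 < r) (y : E2) :
    HasFDerivAt (psiR r) (psiR' r y) y := by
  rcases lt_or_ge ‖y‖ r with h | h
  · have he : psiR r =ᶠ[nhds y] fun _ => 1 := by
      filter_upwards [Metric.ball_mem_nhds y (show (0:ℝ) < r - ‖y‖ by linarith)] with z hz
      rw [Metric.mem_ball, dist_eq_norm] at hz
      have h3 : ‖z‖ ≤ ‖y‖ + ‖z - y‖ := by simpa using norm_add_le y (z - y)
      have : ‖z‖ < r := by linarith
      exact psiTilde_of_le (by rw [div_le_one hr]; exact this.le)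
    rw [psiR'_eq_zero_of_le h.le hr]
    exact (hasFDerivAt_const (1:ℝ) y).congr_of_eventuallyEq he
  · have hy : y ≠ 0 := by
      intro h0; rw [h0, norm_zero] at h; linarith
    have hnorm := norm_hasFDerivAt hy
    have hdiv : HasFDerivAt (fun z : E2 => ‖z‖ / r) (r⁻¹ • (‖y‖⁻¹ • innerSL ℝ y)) y := by
      have h2 := hnorm.const_smul r⁻¹
      have he2 : (fun z : E2 => r⁻¹ • ‖z‖) = fun z : E2 => ‖z‖ / r := by
        funext z; simp [div_eq_inv_mul, smul_eq_mul]
      exact h2.congr_of_eventuallyEq (Filter.Eventually.of_forall fun z => by simp [div_eq_inv_mul, smul_eq_mul])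
    have hc := (psiTilde_hasDerivAt (‖y‖ / r)).comp_hasFDerivAt y hdiv
    have heq : psiR' r y = psiD (‖y‖ / r) • (r⁻¹ • (‖y‖⁻¹ • innerSL ℝ y)) := by
      rw [psiR', smul_smul, smul_smul]
      congr 1
      have hny : ‖y‖ ≠ 0 := norm_ne_zero_iff.mpr hy
      field_simp
    rw [heq]
    exact hc

lemma psiR'_norm_le {r : ℝ} (hr : 0 < r) (y : E2) : ‖psiR' r y‖ ≤ 3 / (2 * r) := by
  rw [psiR']
  rw [norm_smul (psiD (‖y‖ / r) / (r * ‖y‖)) ((innerSL ℝ) y), innerSL_apply_norm]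
  rcases eq_or_ne y 0 with h | h
  · simp [h]; positivity
  · have hy : (0:ℝ) < ‖y‖ := norm_pos_iff.mpr h
    rw [Real.norm_eq_abs, abs_div, abs_of_pos (by positivity : (0:ℝ) < r * ‖y‖)]
    rw [div_mul_eq_mul_div, div_le_div_iff₀ (by positivity) (by positivity)]
    calc |psiD (‖y‖ / r)| * ‖y‖ * (2 * r) ≤ (3/2) * ‖y‖ * (2 * r) := by
          nlinarith [mul_le_mul_of_nonneg_right (psiD_abs_le (‖y‖ / r))
            (by positivity : (0:ℝ) ≤ ‖y‖ * (2 * r))]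
      _ = 3 * (r * ‖y‖) := by ring

/-! ### Volume and integral helpers -/

lemma E2.volume_closedBall_toReal (x₀ : E2) (R : ℝ) (hR : 0 ≤ R) :
    (volume (Metric.closedBall x₀ R)).toReal = Real.pi * R ^ 2 := by
  rw [EuclideanSpace.volume_closedBall]
  simp only [Fintype.card_fin]
  rw [show ((2:ℕ):ℝ) / 2 + 1 = 2 by norm_num]
  rw [Real.Gamma_two]
  rw [ENNReal.toReal_mul, ENNReal.toReal_pow, ENNReal.toReal_ofReal hR,
    ENNReal.toReal_ofReal (by positivity)]
  rw [div_one, Real.sq_sqrt Real.pi_nonneg]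
  ring

lemma integral_le_of_indicator_bound (g : E2 → ℝ) (c R : ℝ) (hR : 0 ≤ R) (x₀ : E2)
    (hg0 : ∀ x, 0 ≤ g x)
    (hg : ∀ᵐ x, g x ≤ Set.indicator (Metric.closedBall x₀ R) (fun _ => c) x) :
    ∫ x, g x ≤ c * (Real.pi * R ^ 2) := by
  have hInt : Integrable ((Metric.closedBall x₀ R).indicator (fun _ => c)) := by
    refine (IntegrableOn.integrable_indicator ?_ measurableSet_closedBall)
    exact integrableOn_const measure_closedBall_lt_top.ne
  have h1 : ∫ x, g x ≤ ∫ x, (Metric.closedBall x₀ R).indicator (fun _ => c) x :=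
    integral_mono_of_nonneg (Filter.Eventually.of_forall hg0) hInt hg
  refine h1.trans ?_
  rw [integral_indicator_const _ measurableSet_closedBall]
  rw [measureReal_def, E2.volume_closedBall_toReal x₀ R hR]
  rw [smul_eq_mul]
  ring_nf
  exact le_rfl

/-! ### The tangent plane estimates -/

lemma lip_fderiv {u : E2 → ℝ} (hu : ContDiff ℝ 2 u) {M : ℝ}
    (hM : ∀ x : E2, ‖fderiv ℝ (fderiv ℝ u) x‖ ≤ M) :
    LipschitzWith M.toNNReal (fderiv ℝ u) := by
  have hdiff : Differentiable ℝ (fderiv ℝ u) :=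
    (hu.fderiv_right (m := 1) (by norm_num)).differentiable (by norm_num)
  refine lipschitzWith_of_nnnorm_fderiv_le hdiff ?_
  intro x
  rw [← NNReal.coe_le_coe, coe_nnnorm]
  exact (hM x).trans (Real.le_coe_toNNReal M)

lemma fderiv_u_dist {u : E2 → ℝ} (hu : ContDiff ℝ 2 u) {M : ℝ}
    (hM : ∀ x : E2, ‖fderiv ℝ (fderiv ℝ u) x‖ ≤ M) (hM0 : 0 ≤ M) (x₀ x : E2) :
    ‖fderiv ℝ u x₀ - fderiv ℝ u x‖ ≤ M * ‖x - x₀‖ := by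
  have h := (lip_fderiv hu hM).dist_le_mul x₀ x
  rw [dist_eq_norm] at h
  refine h.trans ?_
  rw [Real.coe_toNNReal M hM0, dist_eq_norm, ← norm_neg (x₀ - x)]
  simp only [neg_sub]
  exact le_rfl

lemma innerSL_gradient (u : E2 → ℝ) (x₀ : E2) :
    (innerSL ℝ (gradient u x₀) : E2 →L[ℝ] ℝ) = fderiv ℝ u x₀ := by
  have h : InnerProductSpace.toDual ℝ E2 (gradient u x₀) = fderiv ℝ u x₀ := by
    rw [gradient]
    exact LinearIsometryEquiv.apply_symm_apply _ _
  rw [← h]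
  ext z
  simp [InnerProductSpace.toDual_apply_apply]

lemma hasFDerivAt_vsubu {u : E2 → ℝ} (hu : ContDiff ℝ 2 u) {v : E2 → ℝ} {x₀ : E2}
    (hv : ∀ x, v x = u x₀ + ⟪gradient u x₀, x - x₀⟫) (x : E2) :
    HasFDerivAt (fun z => v z - u z) (fderiv ℝ u x₀ - fderiv ℝ u x) x := by
  have hveq : v = fun z => u x₀ + (innerSL ℝ (gradient u x₀) : E2 →L[ℝ] ℝ) (z - x₀) := by
    funext z; rw [hv z]; simp
  have hvd : HasFDerivAt v (fderiv ℝ u x₀) x := by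
    rw [hveq, ← innerSL_gradient u x₀]
    have h1 : HasFDerivAt (fun z : E2 => z - x₀) (ContinuousLinearMap.id ℝ E2) x :=
      (hasFDerivAt_id x).sub_const x₀
    have h2 := ((innerSL ℝ (gradient u x₀) : E2 →L[ℝ] ℝ).hasFDerivAt.comp x h1).const_add (u x₀)
    simpa using h2
  exact hvd.sub (((hu.differentiable (by norm_num)) x).hasFDerivAt)

lemma vsubu_bound {u : E2 → ℝ} (hu : ContDiff ℝ 2 u) {M : ℝ}
    (hM : ∀ x : E2, ‖fderiv ℝ (fderiv ℝ u) x‖ ≤ M) (hM0 : 0 ≤ M) {v : E2 → ℝ} {x₀ : E2}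
    (hv : ∀ x, v x = u x₀ + ⟪gradient u x₀, x - x₀⟫) (x : E2) :
    |v x - u x| ≤ M * ‖x - x₀‖ ^ 2 := by
  set R := ‖x - x₀‖ with hR
  have hconv : Convex ℝ (Metric.closedBall x₀ R) := convex_closedBall x₀ R
  have hder : ∀ z ∈ Metric.closedBall x₀ R,
      HasFDerivWithinAt (fun z => v z - u z) (fderiv ℝ u x₀ - fderiv ℝ u z)
        (Metric.closedBall x₀ R) z :=
    fun z _ => (hasFDerivAt_vsubu hu hv z).hasFDerivWithinAt
  have hbound : ∀ z ∈ Metric.closedBall x₀ R, ‖fderiv ℝ u x₀ - fderiv ℝ u z‖ ≤ M * R := by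
    intro z hz
    rw [Metric.mem_closedBall, dist_eq_norm] at hz
    exact (fderiv_u_dist hu hM hM0 x₀ z).trans (by nlinarith)
  have hx : x ∈ Metric.closedBall x₀ R := by
    rw [Metric.mem_closedBall, dist_eq_norm]
  have hx0 : x₀ ∈ Metric.closedBall x₀ R := by
    rw [Metric.mem_closedBall, dist_self]
    positivity
  have h := hconv.norm_image_sub_le_of_norm_hasFDerivWithin_le hder hbound hx0 hx
  have hval : v x₀ - u x₀ = 0 := by
    rw [hv x₀]; simp
  rw [hval, sub_zero] at h
  calc |v x - u x| = ‖v x - u x‖ := rfl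
    _ ≤ M * R * ‖x - x₀‖ := h
    _ = M * ‖x - x₀‖ ^ 2 := by rw [hR]; ring

/-! ### Frobenius norm bound -/

lemma frobNorm_le (A : E2 →L[ℝ] E2 →L[ℝ] ℝ) : frobNorm A ≤ 2 * ‖A‖ := by
  have hA : ∀ i j : Fin 2,
      (A (EuclideanSpace.single i 1) (EuclideanSpace.single j 1)) ^ 2 ≤ ‖A‖ ^ 2 := by
    intro i j
    have h1 : ‖EuclideanSpace.single i (1:ℝ)‖ = 1 := by
      rw [EuclideanSpace.norm_single, norm_one]
    have h2 : ‖EuclideanSpace.single j (1:ℝ)‖ = 1 := by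
      rw [EuclideanSpace.norm_single, norm_one]
    have h3 : |A (EuclideanSpace.single i 1) (EuclideanSpace.single j 1)| ≤ ‖A‖ := by
      calc |A (EuclideanSpace.single i 1) (EuclideanSpace.single j 1)|
          = ‖A (EuclideanSpace.single i 1) (EuclideanSpace.single j 1)‖ := rfl
        _ ≤ ‖A (EuclideanSpace.single i 1)‖ * ‖EuclideanSpace.single j (1:ℝ)‖ :=
            (A (EuclideanSpace.single i 1)).le_opNorm _
        _ ≤ ‖A‖ * ‖EuclideanSpace.single i (1:ℝ)‖ * ‖EuclideanSpace.single j (1:ℝ)‖ := by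
            rw [h2, mul_one, mul_one]
            exact A.le_opNorm _
        _ = ‖A‖ := by rw [h1, h2]; ring
    calc (A (EuclideanSpace.single i 1) (EuclideanSpace.single j 1)) ^ 2
        = |A (EuclideanSpace.single i 1) (EuclideanSpace.single j 1)| ^ 2 := (sq_abs _).symm
      _ ≤ ‖A‖ ^ 2 := pow_le_pow_left₀ (abs_nonneg _) h3 2
  rw [frobNorm]
  have hsum : (∑ i : Fin 2, ∑ j : Fin 2,
      (A (EuclideanSpace.single i 1) (EuclideanSpace.single j 1)) ^ 2) ≤ 4 * ‖A‖ ^ 2 := by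
    calc (∑ i : Fin 2, ∑ j : Fin 2,
        (A (EuclideanSpace.single i 1) (EuclideanSpace.single j 1)) ^ 2)
        ≤ ∑ _i : Fin 2, ∑ _j : Fin 2, ‖A‖ ^ 2 := by
          refine Finset.sum_le_sum fun i _ => Finset.sum_le_sum fun j _ => hA i j
      _ = 4 * ‖A‖ ^ 2 := by simp [Finset.sum_const]; ring
  calc Real.sqrt (∑ i : Fin 2, ∑ j : Fin 2,
      (A (EuclideanSpace.single i 1) (EuclideanSpace.single j 1)) ^ 2)
      ≤ Real.sqrt (4 * ‖A‖ ^ 2) := Real.sqrt_le_sqrt hsum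
    _ = 2 * ‖A‖ := by
        rw [show (4:ℝ) * ‖A‖ ^ 2 = (2 * ‖A‖) ^ 2 by ring]
        exact Real.sqrt_sq (by positivity)

lemma frobNorm_zero : frobNorm 0 = 0 := by
  simp [frobNorm]

/-- `innerSL` bundled as a genuinely `ℝ`-linear continuous map. -/
noncomputable def innerCLM : E2 →L[ℝ] E2 →L[ℝ] ℝ := innerSL ℝ

lemma innerCLM_apply (y : E2) : innerCLM y = innerSL ℝ y := rfl

lemma innerCLM_norm_le : ‖innerCLM‖ ≤ 1 := by
  refine ContinuousLinearMap.opNorm_le_bound _ zero_le_one ?_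
  intro z
  rw [innerCLM_apply, innerSL_apply_norm, one_mul]

/-! ### Second derivative of `psiR'` on the annulus -/

lemma c2_hasFDerivAt {r : ℝ} (hr : 0 < r) {y : E2} (h1 : r < ‖y‖) (h2 : ‖y‖ < 2 * r) :
    ∃ c2' : E2 →L[ℝ] ℝ,
      HasFDerivAt (fun y' : E2 => psiD (‖y'‖ / r) / (r * ‖y'‖)) c2' y ∧
      ‖c2'‖ ≤ 15 / (2 * r ^ 3) := by
  have hy0 : (0:ℝ) < ‖y‖ := hr.trans h1
  have hy : y ≠ 0 := norm_pos_iff.mp hy0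
  set t := ‖y‖ with ht
  have ht1 : 1 < t / r := (one_lt_div hr).mpr h1
  have ht2 : t / r < 2 := (div_lt_iff₀ hr).mpr (by linarith)
  -- derivative of the numerator
  have hsub : HasDerivAt (fun s : ℝ => s / r - 2) (1 / r) t := by
    simpa using ((hasDerivAt_id t).div_const r).sub_const 2
  have hnum : HasDerivAt (fun s : ℝ => 6 * (s / r - 2) ^ 2 + 6 * (s / r - 2))
      ((12 * (t / r - 2) + 6) / r) t := by
    refine (((hsub.pow 2).const_mul 6).add (hsub.const_mul 6)).congr_deriv ?_
    ring
  have hden : HasDerivAt (fun s : ℝ => r * s) r t := by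
    simpa using (hasDerivAt_id t).const_mul r
  have hdenne : r * t ≠ 0 := by positivity
  have hdiv := hnum.div hden hdenne
  set Gd : ℝ := ((12 * (t / r - 2) + 6) / r * (r * t) -
    (6 * (t / r - 2) ^ 2 + 6 * (t / r - 2)) * r) / (r * t) ^ 2 with hGd
  have hGd_eq : Gd = (12 * (t / r - 2) + 6) / (r ^ 2 * t) -
      (6 * (t / r - 2) ^ 2 + 6 * (t / r - 2)) / (r * t ^ 2) := by
    rw [hGd]
    field_simp
  have hGd_abs : |Gd| ≤ 15 / (2 * r ^ 3) := by
    rw [hGd_eq]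
    have ha : |(12 * (t / r - 2) + 6) / (r ^ 2 * t)| ≤ 6 / r ^ 3 := by
      rw [abs_div, abs_of_pos (by positivity : (0:ℝ) < r ^ 2 * t)]
      have hnum6 : |12 * (t / r - 2) + 6| ≤ 6 := by
        rw [abs_le]; constructor <;> nlinarith
      calc |12 * (t / r - 2) + 6| / (r ^ 2 * t) ≤ 6 / (r ^ 2 * t) := by gcongr
        _ ≤ 6 / r ^ 3 := by
            apply div_le_div_of_nonneg_left (by norm_num) (by positivity)
            nlinarith
    have hb : |(6 * (t / r - 2) ^ 2 + 6 * (t / r - 2)) / (r * t ^ 2)| ≤ (3/2) / r ^ 3 := by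
      rw [abs_div, abs_of_pos (by positivity : (0:ℝ) < r * t ^ 2)]
      have hnum32 : |6 * (t / r - 2) ^ 2 + 6 * (t / r - 2)| ≤ 3 / 2 := by
        rw [abs_le]; constructor
        · nlinarith [sq_nonneg (t / r - 3/2)]
        · nlinarith [mul_nonneg (sub_nonneg.mpr ht2.le) (sub_nonneg.mpr ht1.le)]
      calc |6 * (t / r - 2) ^ 2 + 6 * (t / r - 2)| / (r * t ^ 2) ≤ (3/2) / (r * t ^ 2) := by gcongr
        _ ≤ (3/2) / r ^ 3 := by
            apply div_le_div_of_nonneg_left (by norm_num) (by positivity)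
            nlinarith [mul_le_mul_of_nonneg_left (mul_self_le_mul_self hr.le h1.le) hr.le]
    calc |(12 * (t / r - 2) + 6) / (r ^ 2 * t) -
        (6 * (t / r - 2) ^ 2 + 6 * (t / r - 2)) / (r * t ^ 2)|
        ≤ |(12 * (t / r - 2) + 6) / (r ^ 2 * t)| +
          |(6 * (t / r - 2) ^ 2 + 6 * (t / r - 2)) / (r * t ^ 2)| := abs_sub _ _
      _ ≤ 6 / r ^ 3 + (3/2) / r ^ 3 := add_le_add ha hb
      _ = 15 / (2 * r ^ 3) := by field_simp; ring
  have hcomp := hdiv.comp_hasFDerivAt y (norm_hasFDerivAt hy)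
  have hopen : IsOpen {z : E2 | r < ‖z‖ ∧ ‖z‖ < 2 * r} :=
    (isOpen_lt continuous_const continuous_norm).inter
      (isOpen_lt continuous_norm continuous_const)
  have heq : (fun y' : E2 => psiD (‖y'‖ / r) / (r * ‖y'‖)) =ᶠ[nhds y]
      ((fun s : ℝ => (6 * (s / r - 2) ^ 2 + 6 * (s / r - 2)) / (r * s)) ∘ fun y' : E2 => ‖y'‖) := by
    filter_upwards [hopen.mem_nhds ⟨h1, h2⟩] with z hz
    have hz1 : 1 < ‖z‖ / r := (one_lt_div hr).mpr hz.1
    have hz2 : ‖z‖ / r ≤ 2 := ((div_lt_iff₀ hr).mpr (by linarith [hz.2])).le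
    simp only [Function.comp]
    rw [psiD_of_mem hz1 hz2]
  refine ⟨Gd • (‖y‖⁻¹ • innerSL ℝ y), ?_, ?_⟩
  · exact (hcomp.congr_of_eventuallyEq heq)
  · rw [norm_smul Gd (‖y‖⁻¹ • innerSL ℝ y), norm_smul (‖y‖⁻¹) (innerSL ℝ y), innerSL_apply_norm]
    rw [Real.norm_eq_abs, Real.norm_eq_abs, abs_inv, abs_of_pos hy0]
    rw [inv_mul_cancel₀ (ne_of_gt hy0), mul_one]
    exact hGd_abs

lemma psiR'_hasFDerivAt_annulus {r : ℝ} (hr : 0 < r) {y : E2}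
    (h1 : r < ‖y‖) (h2 : ‖y‖ < 2 * r) :
    ∃ Φ : E2 →L[ℝ] E2 →L[ℝ] ℝ, HasFDerivAt (psiR' r) Φ y ∧ ‖Φ‖ ≤ 33 / (2 * r ^ 2) := by
  have hy0 : (0:ℝ) < ‖y‖ := hr.trans h1
  obtain ⟨c2', hc2, hc2b⟩ := c2_hasFDerivAt hr h1 h2
  have hinner : HasFDerivAt (fun y' : E2 => innerSL ℝ y') innerCLM y :=
    innerCLM.hasFDerivAt
  have hsmul := hc2.smul hinner
  have hfun : psiR' r = fun y' : E2 => (psiD (‖y'‖ / r) / (r * ‖y'‖)) • innerSL ℝ y' := rfl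
  refine ⟨(psiD (‖y‖ / r) / (r * ‖y‖)) • innerCLM +
    c2'.smulRight (innerSL ℝ y), ?_, ?_⟩
  · rw [hfun]
    exact hsmul
  · have hb1 : ‖(psiD (‖y‖ / r) / (r * ‖y‖)) • innerCLM‖ ≤
        3 / (2 * r ^ 2) := by
      have hsm : ‖(psiD (‖y‖ / r) / (r * ‖y‖)) • innerCLM‖ ≤
          |psiD (‖y‖ / r) / (r * ‖y‖)| * ‖innerCLM‖ := by
        exact ContinuousLinearMap.opNorm_smul_le (psiD (‖y‖ / r) / (r * ‖y‖)) innerCLM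
      refine hsm.trans ?_
      have hiSL : ‖innerCLM‖ ≤ 1 := innerCLM_norm_le
      have habs : |psiD (‖y‖ / r) / (r * ‖y‖)| ≤ 3 / (2 * r ^ 2) := by
        rw [abs_div, abs_of_pos (by positivity : (0:ℝ) < r * ‖y‖)]
        calc |psiD (‖y‖ / r)| / (r * ‖y‖) ≤ (3/2) / (r * ‖y‖) := by
              gcongr; exact psiD_abs_le _
          _ ≤ (3/2) / (r * r) := by
              apply div_le_div_of_nonneg_left (by norm_num) (by positivity)
              nlinarith
          _ = 3 / (2 * r ^ 2) := by field_simp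
      calc |psiD (‖y‖ / r) / (r * ‖y‖)| * ‖innerCLM‖
          ≤ |psiD (‖y‖ / r) / (r * ‖y‖)| * 1 :=
            mul_le_mul_of_nonneg_left hiSL (abs_nonneg _)
        _ ≤ 3 / (2 * r ^ 2) := by rw [mul_one]; exact habs
    have hb2 : ‖c2'.smulRight (innerSL ℝ y)‖ ≤ 15 / r ^ 2 := by
      rw [ContinuousLinearMap.norm_smulRight_apply, innerSL_apply_norm]
      calc ‖c2'‖ * ‖y‖ ≤ (15 / (2 * r ^ 3)) * (2 * r) := by
            apply mul_le_mul hc2b h2.le (norm_nonneg y) (by positivity)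
        _ = 15 / r ^ 2 := by field_simp
    calc ‖(psiD (‖y‖ / r) / (r * ‖y‖)) • innerCLM +
        c2'.smulRight (innerSL ℝ y)‖
        ≤ 3 / (2 * r ^ 2) + 15 / r ^ 2 :=
          (ContinuousLinearMap.opNorm_add_le _ _).trans (add_le_add hb1 hb2)
      _ = 33 / (2 * r ^ 2) := by field_simp; ring

lemma frobNorm_nonneg (A : E2 →L[ℝ] E2 →L[ℝ] ℝ) : 0 ≤ frobNorm A := Real.sqrt_nonneg _

lemma opnorm_zero_sub (A : E2 →L[ℝ] E2 →L[ℝ] ℝ) :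
    ‖(0 : E2 →L[ℝ] E2 →L[ℝ] ℝ) - A‖ = ‖A‖ := by
  exact (congrArg norm (zero_sub A)).trans (norm_neg A)

/-- Lemma 3.9: `w(x) = (v(x) − u(x)) ψ_r(x − x₀)`, where `v` is the tangent plane of `u`
at `x₀`, is a correction function for a single cluster: (a) `w = v − u` on the closed
ball of radius `r` around `x₀` and `w = 0` outside the ball of radius `2r`;
(b) `∫ ‖∇w‖² ≤ 1600 π r⁴ M²`; (c) `∫ ‖D²w‖_F² ≤ 4·149²·π r² M²` (the last integral over
the full-measure set where `w` is twice differentiable; the Hessian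
`fderiv ℝ (fderiv ℝ w)` takes the junk value `0` off that set). -/
theorem stmt_15 (u : E2 → ℝ) (hu : ContDiff ℝ 2 u) (M : ℝ)
    (hM : ∀ x : E2, ‖fderiv ℝ (fderiv ℝ u) x‖ ≤ M)
    (x₀ : E2) (r : ℝ) (hr : 0 < r)
    (v : E2 → ℝ) (hv : ∀ x, v x = u x₀ + ⟪gradient u x₀, x - x₀⟫)
    (w : E2 → ℝ) (hw : ∀ x, w x = (v x - u x) * psiR r (x - x₀)) :
    ((∀ x : E2, ‖x - x₀‖ ≤ r → w x = v x - u x) ∧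
      (∀ x : E2, 2 * r ≤ ‖x - x₀‖ → w x = 0)) ∧
    (∫ x, ‖gradient w x‖ ^ 2 ≤ 1600 * Real.pi * r ^ 4 * M ^ 2) ∧
    (∫ x, (frobNorm (fderiv ℝ (fderiv ℝ w) x)) ^ 2 ≤
        4 * 149 ^ 2 * Real.pi * r ^ 2 * M ^ 2) := by
  have hM0 : 0 ≤ M := le_trans (ContinuousLinearMap.opNorm_nonneg _) (hM x₀)
  -- part (a)
  have ha1 : ∀ x : E2, ‖x - x₀‖ ≤ r → w x = v x - u x := by
    intro x hx
    rw [hw, psiR, psiTilde_of_le (by rw [div_le_one hr]; exact hx), mul_one]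
  have ha2 : ∀ x : E2, 2 * r ≤ ‖x - x₀‖ → w x = 0 := by
    intro x hx
    rw [hw, psiR, psiTilde_of_ge (by rw [le_div_iff₀ hr]; linarith), mul_zero]
  -- first derivative of w
  set F' : E2 → (E2 →L[ℝ] ℝ) := fun x => fderiv ℝ u x₀ - fderiv ℝ u x with hF'def
  set W' : E2 → (E2 →L[ℝ] ℝ) :=
    fun x => (v x - u x) • psiR' r (x - x₀) + psiR r (x - x₀) • F' x with hW'def
  have hshift : ∀ x : E2, HasFDerivAt (fun z : E2 => psiR r (z - x₀)) (psiR' r (x - x₀)) x := by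
    intro x
    have h := (psiR_hasFDerivAt hr (x - x₀)).comp x ((hasFDerivAt_id x).sub_const x₀)
    exact h
  have hWd : ∀ x : E2, HasFDerivAt w (W' x) x := by
    intro x
    have h1 := hasFDerivAt_vsubu hu hv x
    have h2 := hshift x
    have h3 := h1.mul h2
    have hwe : w = fun y : E2 => (v y - u y) * psiR r (y - x₀) := funext hw
    rw [hwe]
    exact h3
  have hfw : fderiv ℝ w = W' := funext fun x => (hWd x).fderiv
  have hgradw : ∀ x : E2, ‖gradient w x‖ = ‖W' x‖ := by
    intro x
    rw [gradient, hfw]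
    exact LinearIsometryEquiv.norm_map _ _
  -- part (b)
  have hW'bound : ∀ x : E2, ‖x - x₀‖ ≤ 2 * r → ‖W' x‖ ≤ 8 * r * M := by
    intro x hx
    have hb1 : ‖(v x - u x) • psiR' r (x - x₀)‖ ≤ 6 * r * M := by
      refine (ContinuousLinearMap.opNorm_smul_le (v x - u x) (psiR' r (x - x₀))).trans ?_
      have h1 : ‖v x - u x‖ ≤ M * (2*r)^2 := by
        rw [Real.norm_eq_abs]
        refine (vsubu_bound hu hM hM0 hv x).trans ?_
        have h2 : ‖x - x₀‖^2 ≤ (2*r)^2 := by nlinarith [norm_nonneg (x - x₀)]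
        nlinarith
      have h2 := psiR'_norm_le hr (x - x₀)
      calc ‖v x - u x‖ * ‖psiR' r (x - x₀)‖ ≤ (M * (2*r)^2) * (3 / (2*r)) :=
            mul_le_mul h1 h2 (norm_nonneg _) (by positivity)
        _ = 6 * r * M := by field_simp; ring
    have hb2 : ‖psiR r (x - x₀) • F' x‖ ≤ 2 * r * M := by
      refine (ContinuousLinearMap.opNorm_smul_le (psiR r (x - x₀)) (F' x)).trans ?_
      have hψ := psiTilde_mem_Icc (‖x - x₀‖ / r)
      have h1 : ‖psiR r (x - x₀)‖ ≤ 1 := by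
        rw [Real.norm_eq_abs, psiR, abs_le]; exact ⟨by linarith [hψ.1], hψ.2⟩
      have h2 : ‖F' x‖ ≤ M * (2*r) := by
        refine (fderiv_u_dist hu hM hM0 x₀ x).trans ?_
        nlinarith
      calc ‖psiR r (x - x₀)‖ * ‖F' x‖ ≤ 1 * (M * (2*r)) :=
            mul_le_mul h1 h2 (norm_nonneg _) zero_le_one
        _ = 2 * r * M := by ring
    calc ‖W' x‖ ≤ ‖(v x - u x) • psiR' r (x - x₀)‖ + ‖psiR r (x - x₀) • F' x‖ :=
          norm_add_le _ _
      _ ≤ 6*r*M + 2*r*M := add_le_add hb1 hb2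
      _ = 8*r*M := by ring
  have hW'zero : ∀ x : E2, 2 * r < ‖x - x₀‖ → W' x = 0 := by
    intro x hx
    have h1 : psiR' r (x - x₀) = 0 := psiR'_eq_zero_of_ge (le_of_lt hx) hr
    have h2 : psiR r (x - x₀) = 0 := psiTilde_of_ge (by rw [le_div_iff₀ hr]; linarith)
    have h3 : W' x = (v x - u x) • psiR' r (x - x₀) + psiR r (x - x₀) • F' x := rfl
    rw [h3, h1, h2, smul_zero, zero_smul, add_zero]
  have hb : ∫ x, ‖gradient w x‖ ^ 2 ≤ 1600 * Real.pi * r ^ 4 * M ^ 2 := by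
    have hbint : ∫ x, ‖gradient w x‖ ^ 2 ≤ (8*r*M)^2 * (Real.pi * (2*r)^2) := by
      refine integral_le_of_indicator_bound (fun x => ‖gradient w x‖^2) ((8*r*M)^2) (2*r)
        (by positivity) x₀ (fun x => by positivity) ?_
      refine Filter.Eventually.of_forall ?_
      intro x
      show ‖gradient w x‖ ^ 2 ≤ Set.indicator (Metric.closedBall x₀ (2*r)) (fun _ => (8*r*M)^2) x
      rcases le_or_gt ‖x - x₀‖ (2*r) with h | h
      · rw [Set.indicator_of_mem (by rw [Metric.mem_closedBall, dist_eq_norm]; exact h)]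
        rw [hgradw]
        have := hW'bound x h
        nlinarith [norm_nonneg (W' x)]
      · rw [Set.indicator_of_notMem
          (by rw [Metric.mem_closedBall, dist_eq_norm]; exact not_le.mpr h)]
        rw [hgradw, hW'zero x h]
        simp
    refine hbint.trans ?_
    nlinarith [mul_nonneg (mul_nonneg Real.pi_pos.le (pow_nonneg hr.le 4)) (sq_nonneg M)]
  -- part (c)
  have hF'd : ∀ x : E2, HasFDerivAt F' (0 - fderiv ℝ (fderiv ℝ u) x) x := by
    intro x
    have hD2u : HasFDerivAt (fderiv ℝ u) (fderiv ℝ (fderiv ℝ u) x) x :=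
      ((hu.fderiv_right (m := 1) (by norm_num)).differentiable (by norm_num) x).hasFDerivAt
    exact (hasFDerivAt_const (fderiv ℝ u x₀) x).sub hD2u
  have hptc : ∀ x : E2, ‖x - x₀‖ ≠ r → ‖x - x₀‖ ≠ 2*r →
      frobNorm (fderiv ℝ (fderiv ℝ w) x) ^ 2 ≤
        Set.indicator (Metric.closedBall x₀ (2*r)) (fun _ => (146*M)^2) x := by
    intro x hxr hx2r
    have hnormcont : Continuous fun z : E2 => ‖z - x₀‖ :=
      (continuous_id.sub continuous_const).norm
    rcases lt_trichotomy ‖x - x₀‖ r with hlt | hEq | hgt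
    · -- inner region
      have hmem : x ∈ Metric.closedBall x₀ (2*r) := by
        rw [Metric.mem_closedBall, dist_eq_norm]; linarith
      rw [Set.indicator_of_mem hmem]
      have hopen : IsOpen {z : E2 | ‖z - x₀‖ < r} := isOpen_lt hnormcont continuous_const
      have hev : W' =ᶠ[nhds x] F' := by
        filter_upwards [hopen.mem_nhds hlt] with z hz
        have h1 : psiR' r (z - x₀) = 0 := psiR'_eq_zero_of_le (le_of_lt hz) hr
        have h2 : psiR r (z - x₀) = 1 := psiTilde_of_le (by rw [div_le_one hr]; exact hz.le)
        have h3 : W' z = (v z - u z) • psiR' r (z - x₀) + psiR r (z - x₀) • F' z := rfl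
        rw [h3, h1, h2, smul_zero, one_smul, zero_add]
      have hD2 : fderiv ℝ (fderiv ℝ w) x = 0 - fderiv ℝ (fderiv ℝ u) x := by
        rw [hfw, hev.fderiv_eq, (hF'd x).fderiv]
      rw [hD2]
      have hn : ‖(0 : E2 →L[ℝ] E2 →L[ℝ] ℝ) - fderiv ℝ (fderiv ℝ u) x‖ ≤ M := by
        rw [opnorm_zero_sub]; exact hM x
      have hf : frobNorm (0 - fderiv ℝ (fderiv ℝ u) x) ≤ 146 * M := by
        refine (frobNorm_le _).trans ?_
        linarith
      have h0 : (0:ℝ) ≤ frobNorm (0 - fderiv ℝ (fderiv ℝ u) x) := frobNorm_nonneg _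
      nlinarith
    · exact absurd hEq hxr
    rcases lt_trichotomy ‖x - x₀‖ (2*r) with hlt2 | hEq2 | hgt2
    · -- annulus
      have hmem : x ∈ Metric.closedBall x₀ (2*r) := by
        rw [Metric.mem_closedBall, dist_eq_norm]; linarith
      rw [Set.indicator_of_mem hmem]
      obtain ⟨Φ, hΦ, hΦb⟩ := psiR'_hasFDerivAt_annulus hr hgt hlt2
      have hΦs : HasFDerivAt (fun z : E2 => psiR' r (z - x₀)) Φ x := by
        have h := hΦ.comp x ((hasFDerivAt_id x).sub_const x₀)
        exact h
      have h1 := hasFDerivAt_vsubu hu hv x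
      have hT1 := h1.smul hΦs
      have hT2 := (hshift x).smul (hF'd x)
      have hWd2 : HasFDerivAt W'
          ((v x - u x) • Φ + (ContinuousLinearMap.smulRight (F' x) (psiR' r (x - x₀))) +
            (psiR r (x - x₀) • (0 - fderiv ℝ (fderiv ℝ u) x) +
              ContinuousLinearMap.smulRight (psiR' r (x - x₀)) (F' x))) x := by
        have h := hT1.add hT2
        exact h
      have hD2 : fderiv ℝ (fderiv ℝ w) x =
          (v x - u x) • Φ + (ContinuousLinearMap.smulRight (F' x) (psiR' r (x - x₀))) +
            (psiR r (x - x₀) • (0 - fderiv ℝ (fderiv ℝ u) x) +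
              ContinuousLinearMap.smulRight (psiR' r (x - x₀)) (F' x)) := by
        rw [hfw]; exact hWd2.fderiv
      have hvub : ‖v x - u x‖ ≤ M * (2*r)^2 := by
        rw [Real.norm_eq_abs]
        refine (vsubu_bound hu hM hM0 hv x).trans ?_
        have h2 : ‖x - x₀‖^2 ≤ (2*r)^2 := by nlinarith [norm_nonneg (x - x₀)]
        nlinarith
      have hF'b : ‖F' x‖ ≤ M * (2*r) := by
        refine (fderiv_u_dist hu hM hM0 x₀ x).trans ?_
        nlinarith
      have hψ1 : ‖psiR r (x - x₀)‖ ≤ 1 := by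
        have hψ := psiTilde_mem_Icc (‖x - x₀‖ / r)
        rw [Real.norm_eq_abs, psiR, abs_le]; exact ⟨by linarith [hψ.1], hψ.2⟩
      have hΨb := psiR'_norm_le hr (x - x₀)
      have hP1 : ‖(v x - u x) • Φ‖ ≤ 66 * M := by
        refine (ContinuousLinearMap.opNorm_smul_le (v x - u x) Φ).trans ?_
        calc ‖v x - u x‖ * ‖Φ‖ ≤ (M * (2*r)^2) * (33 / (2 * r^2)) :=
              mul_le_mul hvub hΦb (ContinuousLinearMap.opNorm_nonneg _) (by positivity)
          _ = 66 * M := by field_simp; ring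
      have hP2 : ‖ContinuousLinearMap.smulRight (F' x) (psiR' r (x - x₀))‖ ≤ 3 * M := by
        rw [ContinuousLinearMap.norm_smulRight_apply]
        calc ‖F' x‖ * ‖psiR' r (x - x₀)‖ ≤ (M * (2*r)) * (3 / (2*r)) :=
              mul_le_mul hF'b hΨb (norm_nonneg _) (by positivity)
          _ = 3 * M := by field_simp
      have hP3 : ‖psiR r (x - x₀) • (0 - fderiv ℝ (fderiv ℝ u) x)‖ ≤ M := by
        refine (ContinuousLinearMap.opNorm_smul_le (psiR r (x - x₀))
          (0 - fderiv ℝ (fderiv ℝ u) x)).trans ?_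
        have hn : ‖(0 : E2 →L[ℝ] E2 →L[ℝ] ℝ) - fderiv ℝ (fderiv ℝ u) x‖ ≤ M := by
          rw [opnorm_zero_sub]; exact hM x
        calc ‖psiR r (x - x₀)‖ * ‖(0 : E2 →L[ℝ] E2 →L[ℝ] ℝ) - fderiv ℝ (fderiv ℝ u) x‖
            ≤ 1 * M := mul_le_mul hψ1 hn (ContinuousLinearMap.opNorm_nonneg _) zero_le_one
          _ = M := one_mul M
      have hP4 : ‖ContinuousLinearMap.smulRight (psiR' r (x - x₀)) (F' x)‖ ≤ 3 * M := by
        rw [ContinuousLinearMap.norm_smulRight_apply]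
        calc ‖psiR' r (x - x₀)‖ * ‖F' x‖ ≤ (3 / (2*r)) * (M * (2*r)) :=
              mul_le_mul hΨb hF'b (norm_nonneg _) (by positivity)
          _ = 3 * M := by field_simp
      have htot : ‖(v x - u x) • Φ + (ContinuousLinearMap.smulRight (F' x) (psiR' r (x - x₀))) +
          (psiR r (x - x₀) • (0 - fderiv ℝ (fderiv ℝ u) x) +
            ContinuousLinearMap.smulRight (psiR' r (x - x₀)) (F' x))‖ ≤ 73 * M := by
        calc ‖_ + _‖ ≤ ‖(v x - u x) • Φ +
              (ContinuousLinearMap.smulRight (F' x) (psiR' r (x - x₀)))‖ +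
              ‖psiR r (x - x₀) • (0 - fderiv ℝ (fderiv ℝ u) x) +
                ContinuousLinearMap.smulRight (psiR' r (x - x₀)) (F' x)‖ :=
            ContinuousLinearMap.opNorm_add_le _ _
          _ ≤ (‖(v x - u x) • Φ‖ + ‖ContinuousLinearMap.smulRight (F' x) (psiR' r (x - x₀))‖) +
              (‖psiR r (x - x₀) • (0 - fderiv ℝ (fderiv ℝ u) x)‖ +
                ‖ContinuousLinearMap.smulRight (psiR' r (x - x₀)) (F' x)‖) :=
            add_le_add (ContinuousLinearMap.opNorm_add_le _ _)
              (ContinuousLinearMap.opNorm_add_le _ _)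
          _ ≤ (66*M + 3*M) + (M + 3*M) := by
            exact add_le_add (add_le_add hP1 hP2) (add_le_add hP3 hP4)
          _ = 73 * M := by ring
      rw [hD2]
      have hf : frobNorm ((v x - u x) • Φ +
          (ContinuousLinearMap.smulRight (F' x) (psiR' r (x - x₀))) +
          (psiR r (x - x₀) • (0 - fderiv ℝ (fderiv ℝ u) x) +
            ContinuousLinearMap.smulRight (psiR' r (x - x₀)) (F' x))) ≤ 146 * M := by
        refine (frobNorm_le _).trans ?_
        linarith
      have h0 := frobNorm_nonneg ((v x - u x) • Φ +
          (ContinuousLinearMap.smulRight (F' x) (psiR' r (x - x₀))) +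
          (psiR r (x - x₀) • (0 - fderiv ℝ (fderiv ℝ u) x) +
            ContinuousLinearMap.smulRight (psiR' r (x - x₀)) (F' x)))
      nlinarith
    · exact absurd hEq2 hx2r
    · -- outer region
      rw [Set.indicator_of_notMem
        (by rw [Metric.mem_closedBall, dist_eq_norm]; exact not_le.mpr hgt2)]
      have hopen : IsOpen {z : E2 | 2*r < ‖z - x₀‖} := isOpen_lt continuous_const hnormcont
      have hev : W' =ᶠ[nhds x] (fun _ => (0 : E2 →L[ℝ] ℝ)) := by
        filter_upwards [hopen.mem_nhds hgt2] with z hz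
        exact hW'zero z hz
      have hD2 : fderiv ℝ (fderiv ℝ w) x = 0 := by
        rw [hfw, hev.fderiv_eq, (hasFDerivAt_const (0 : E2 →L[ℝ] ℝ) x).fderiv]
      rw [hD2, frobNorm_zero]
      norm_num
  refine ⟨⟨ha1, ha2⟩, hb, ?_⟩
  have hsph : ∀ᵐ x : E2, ‖x - x₀‖ ≠ r ∧ ‖x - x₀‖ ≠ 2*r := by
    have h1 : volume (Metric.sphere x₀ r) = 0 := Measure.addHaar_sphere (μ := volume) x₀ r
    have h2 : volume (Metric.sphere x₀ (2*r)) = 0 :=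
      Measure.addHaar_sphere (μ := volume) x₀ (2*r)
    have h3 := measure_union_null h1 h2
    have h4 := measure_eq_zero_iff_ae_notMem.mp h3
    filter_upwards [h4] with x hx
    constructor
    · intro hc
      exact hx (Or.inl (by rw [Metric.mem_sphere, dist_eq_norm]; exact hc))
    · intro hc
      exact hx (Or.inr (by rw [Metric.mem_sphere, dist_eq_norm]; exact hc))
  have hcint : ∫ x, frobNorm (fderiv ℝ (fderiv ℝ w) x) ^ 2 ≤
      (146*M)^2 * (Real.pi * (2*r)^2) := by
    refine integral_le_of_indicator_bound (fun x => frobNorm (fderiv ℝ (fderiv ℝ w) x) ^ 2)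
      ((146*M)^2) (2*r) (by positivity) x₀ (fun x => by positivity) ?_
    filter_upwards [hsph] with x hx
    exact hptc x hx.1 hx.2
  refine hcint.trans ?_
  nlinarith [mul_nonneg (mul_nonneg Real.pi_pos.le (sq_nonneg r)) (sq_nonneg M)]
end
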